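/- arXiv:1103.2261 — 13 statements merged into one kernel-verified Lean document; each statement's English description precedes it below -/
import Mathlib

section
/- Let H be a finite prebialgebra (finitely generated projective over k). Then H satisfies the left monoidality axiom (lm): ε(hkl) = ε(hk₍₁₎)ε(k₍₂₎l) for all h,k,l ∈ H, if and only if the dual prebialgebra H* satisfies the left comonoidality axiom (lc): Δ²(ε) = ε₍₁₎ ⊗ ε₍₂₎ε₍₁'₎ ⊗ ε₍₂'₎ (where H* has the opposite convolution product and the comultiplication dual to multiplication of H). -/
set_option maxHeartbeats 1000000
set_option synthInstance.maxHeartbeats 400000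
set_option linter.unusedSectionVars false


open TensorProduct Coalgebra

section Prebialgebra

variable (R H : Type) [CommRing R] [Ring H] [Algebra R H] [Coalgebra R H]

/-- The target map `ε_t(h) = ε(1₍₁₎h)1₍₂₎`. -/
noncomputable def epsT : H →ₗ[R] H :=
  (TensorProduct.lid R H).toLinearMap ∘ₗ
    TensorProduct.map Coalgebra.counit LinearMap.id ∘ₗ
    LinearMap.mulLeft R (Coalgebra.comul (R := R) (1 : H)) ∘ₗ
    Algebra.TensorProduct.includeLeft.toLinearMap

/-- The source map `ε_s(h) = ε(h1₍₂₎)1₍₁₎`. -/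
noncomputable def epsS : H →ₗ[R] H :=
  (TensorProduct.rid R H).toLinearMap ∘ₗ
    TensorProduct.map LinearMap.id Coalgebra.counit ∘ₗ
    LinearMap.mulRight R (Coalgebra.comul (R := R) (1 : H)) ∘ₗ
    Algebra.TensorProduct.includeRight.toLinearMap

/-- The map `ε̄_s(h) = ε(1₍₂₎h)1₍₁₎`. -/
noncomputable def epsSbar : H →ₗ[R] H :=
  (TensorProduct.rid R H).toLinearMap ∘ₗ
    TensorProduct.map LinearMap.id Coalgebra.counit ∘ₗ
    LinearMap.mulLeft R (Coalgebra.comul (R := R) (1 : H)) ∘ₗ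
    Algebra.TensorProduct.includeRight.toLinearMap

/-- The map `ε̄_t(h) = ε(h1₍₁₎)1₍₂₎`. -/
noncomputable def epsTbar : H →ₗ[R] H :=
  (TensorProduct.lid R H).toLinearMap ∘ₗ
    TensorProduct.map Coalgebra.counit LinearMap.id ∘ₗ
    LinearMap.mulRight R (Coalgebra.comul (R := R) (1 : H)) ∘ₗ
    Algebra.TensorProduct.includeLeft.toLinearMap

/-- The prebialgebra axiom: the comultiplication is multiplicative, `Δ(hk) = Δ(h)Δ(k)`. -/
def ComulMul : Prop :=
  ∀ a b : H,
    Coalgebra.comul (R := R) (a * b) = Coalgebra.comul (R := R) a * Coalgebra.comul (R := R) b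

/-- Axiom (lm): `ε(hkl) = ε(hk₍₁₎)ε(k₍₂₎l)` for all `h,k,l`. -/
noncomputable def LM : Prop :=
  ∀ h k l : H,
    Coalgebra.counit (R := R) (h * k * l) =
      LinearMap.mul' R R
        (TensorProduct.map (Coalgebra.counit ∘ₗ LinearMap.mulLeft R h)
          (Coalgebra.counit ∘ₗ LinearMap.mulRight R l) (Coalgebra.comul k))

/-- Axiom (rm): `ε(hkl) = ε(hk₍₂₎)ε(k₍₁₎l)` for all `h,k,l`. -/
noncomputable def RM : Prop :=
  ∀ h k l : H,
    Coalgebra.counit (R := R) (h * k * l) =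
      LinearMap.mul' R R
        (TensorProduct.map (Coalgebra.counit ∘ₗ LinearMap.mulRight R l)
          (Coalgebra.counit ∘ₗ LinearMap.mulLeft R h) (Coalgebra.comul k))

/-- `Δ²(1) = (id ⊗ Δ)(Δ(1))`, an element of `H ⊗ (H ⊗ H)`. -/
noncomputable def comulSq1 : H ⊗[R] (H ⊗[R] H) :=
  (TensorProduct.map LinearMap.id Coalgebra.comul) (Coalgebra.comul (R := R) (1 : H))

/-- `1₍₁₎ ⊗ 1₍₂₎ ⊗ 1`, an element of `H ⊗ (H ⊗ H)`. -/
noncomputable def d1Left : H ⊗[R] (H ⊗[R] H) :=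
  (TensorProduct.map LinearMap.id Algebra.TensorProduct.includeLeft.toLinearMap)
    (Coalgebra.comul (R := R) (1 : H))

/-- `1 ⊗ 1₍₁₎ ⊗ 1₍₂₎`, an element of `H ⊗ (H ⊗ H)`. -/
noncomputable def d1Right : H ⊗[R] (H ⊗[R] H) :=
  (1 : H) ⊗ₜ[R] (Coalgebra.comul (R := R) (1 : H))

/-- Axiom (lc): `Δ²(1) = 1₍₁₎ ⊗ 1₍₂₎1₍₁'₎ ⊗ 1₍₂'₎`. -/
noncomputable def LC : Prop := comulSq1 R H = d1Left R H * d1Right R H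

/-- Axiom (rc): `Δ²(1) = 1₍₁₎ ⊗ 1₍₁'₎1₍₂₎ ⊗ 1₍₂'₎`. -/
noncomputable def RC : Prop := comulSq1 R H = d1Right R H * d1Left R H

/-- The map `g : H → H*`, `⟨g(h), k⟩ = ε(kh)`. -/
noncomputable def gmap : H →ₗ[R] (H →ₗ[R] R) :=
  LinearMap.llcomp R H H R (Coalgebra.counit (R := R)) ∘ₗ (LinearMap.mul R H).flip

/-- The map `g' : H → H*`, `⟨g'(h), k⟩ = ε(hk)`. -/
noncomputable def gmap' : H →ₗ[R] (H →ₗ[R] R) :=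
  LinearMap.llcomp R H H R (Coalgebra.counit (R := R)) ∘ₗ LinearMap.mul R H

/-- The map `f : H* → H`, `f(h*) = ⟨h*,1₍₁₎⟩1₍₂₎`. -/
noncomputable def fmap (φ : H →ₗ[R] R) : H :=
  (TensorProduct.lid R H)
    ((TensorProduct.map φ LinearMap.id) (Coalgebra.comul (R := R) (1 : H)))

end Prebialgebra

section Dual

variable (R H : Type) [CommRing R] [Ring H] [Algebra R H] [Coalgebra R H]

/-- The opposite convolution product on `H* = Hom(H,k)`, as a linear map
`H* ⊗ H* → H*`: `⟨φψ, h⟩ = ⟨φ, h₍₂₎⟩⟨ψ, h₍₁₎⟩`. -/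
noncomputable def convOp :
    ((H →ₗ[R] R) ⊗[R] (H →ₗ[R] R)) →ₗ[R] (H →ₗ[R] R) :=
  (LinearMap.lcomp R R (Coalgebra.comul (R := R)) ∘ₗ TensorProduct.dualDistrib R H H) ∘ₗ
    (TensorProduct.comm R (H →ₗ[R] R) (H →ₗ[R] R)).toLinearMap

end Dual

section AuxLM

open TensorProduct LinearMap

variable (R H : Type) [CommRing R] [Ring H] [Algebra R H] [Coalgebra R H]

/-- Triple evaluation map `H* ⊗ (H* ⊗ H*) → (H ⊗ (H ⊗ H))*`. -/
noncomputable def Emap :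
    ((H →ₗ[R] R) ⊗[R] ((H →ₗ[R] R) ⊗[R] (H →ₗ[R] R))) →ₗ[R]
      (H ⊗[R] (H ⊗[R] H)) →ₗ[R] R :=
  TensorProduct.dualDistrib R H (H ⊗[R] H) ∘ₗ
    TensorProduct.map LinearMap.id (TensorProduct.dualDistrib R H H)

variable {R H}

lemma Emap_tmul (φ ψ χ : H →ₗ[R] R) (a b c : H) :
    Emap R H (φ ⊗ₜ (ψ ⊗ₜ χ)) (a ⊗ₜ (b ⊗ₜ c)) = φ a * (ψ b * χ c) := by
  simp [Emap, TensorProduct.dualDistrib_apply]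

lemma dual_expand {n : ℕ} {x : Fin n → H} {f : Fin n → (H →ₗ[R] R)}
    (hx : ∀ m : H, ∑ i, f i m • x i = m) (φ : H →ₗ[R] R) :
    φ = ∑ i, φ (x i) • f i := by
  ext m
  conv_lhs => rw [← hx m]
  simp [mul_comm]

lemma triple_expand {n : ℕ} {x : Fin n → H} {f : Fin n → (H →ₗ[R] R)}
    (hx : ∀ m : H, ∑ i, f i m • x i = m)
    (T : (H →ₗ[R] R) ⊗[R] ((H →ₗ[R] R) ⊗[R] (H →ₗ[R] R))) :
    T = ∑ i, ∑ j, ∑ k,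
      Emap R H T (x i ⊗ₜ (x j ⊗ₜ x k)) • (f i ⊗ₜ (f j ⊗ₜ f k)) := by
  induction T using TensorProduct.induction_on with
  | zero => simp
  | add u v hu hv =>
    conv_lhs => rw [hu, hv]
    simp [add_smul, Finset.sum_add_distrib]
  | tmul φ S =>
    induction S using TensorProduct.induction_on with
    | zero => simp [tmul_zero]
    | add u v hu hv =>
      conv_lhs => rw [tmul_add, hu, hv]
      simp [tmul_add, add_smul, Finset.sum_add_distrib]
    | tmul ψ χ =>
      simp only [Emap_tmul]
      conv_lhs => rw [dual_expand hx φ]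
      rw [sum_tmul]
      refine Finset.sum_congr rfl fun i _ => ?_
      conv_lhs => rw [dual_expand hx ψ]
      rw [sum_tmul, tmul_sum]
      refine Finset.sum_congr rfl fun j _ => ?_
      conv_lhs => rw [dual_expand hx χ]
      rw [tmul_sum, tmul_sum]
      refine Finset.sum_congr rfl fun k _ => ?_
      simp only [smul_tmul, tmul_smul, smul_smul]
      congr 1
      ring

lemma eval_one (Δs : (H →ₗ[R] R) →ₗ[R] (H →ₗ[R] R) ⊗[R] (H →ₗ[R] R))
    (hΔs : ∀ (φ : H →ₗ[R] R) (h k : H),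
      TensorProduct.dualDistrib R H H (Δs φ) (k ⊗ₜ[R] h) = φ (h * k))
    (T : (H →ₗ[R] R) ⊗[R] (H →ₗ[R] R)) (a b c : H) :
    Emap R H ((TensorProduct.map LinearMap.id Δs) T) (a ⊗ₜ (b ⊗ₜ c)) =
      TensorProduct.dualDistrib R H H T (a ⊗ₜ (c * b)) := by
  induction T using TensorProduct.induction_on with
  | zero => simp
  | add u v hu hv => simp [map_add, hu, hv]
  | tmul φ ψ =>
    simp only [TensorProduct.map_tmul, LinearMap.id_coe, id_eq, Emap,
      LinearMap.comp_apply, TensorProduct.dualDistrib_apply]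
    rw [hΔs ψ c b]

lemma eval_two (T T' : (H →ₗ[R] R) ⊗[R] (H →ₗ[R] R)) (a b c : H) :
    Emap R H
        ((TensorProduct.map LinearMap.id
            ((TensorProduct.map (convOp R H) LinearMap.id) ∘ₗ
              (TensorProduct.assoc R (H →ₗ[R] R) (H →ₗ[R] R) (H →ₗ[R] R)).symm.toLinearMap))
          ((TensorProduct.assoc R (H →ₗ[R] R) (H →ₗ[R] R)
              ((H →ₗ[R] R) ⊗[R] (H →ₗ[R] R)))
            (T ⊗ₜ[R] T'))) (a ⊗ₜ (b ⊗ₜ c)) =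
      LinearMap.mul' R R
        (TensorProduct.map
          (TensorProduct.dualDistrib R H H T' ∘ₗ (TensorProduct.mk R H H).flip c)
          (TensorProduct.dualDistrib R H H T ∘ₗ TensorProduct.mk R H H a)
          (Coalgebra.comul (R := R) b)) := by
  induction T using TensorProduct.induction_on with
  | zero =>
    simp only [zero_tmul, map_zero, LinearMap.zero_apply, LinearMap.zero_comp,
      TensorProduct.map_zero_right]
  | add u v hu hv =>
    simp only [add_tmul, map_add, LinearMap.add_apply, LinearMap.add_comp,
      TensorProduct.map_add_right, hu, hv]
  | tmul φ ψ =>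
    induction T' using TensorProduct.induction_on with
    | zero =>
      simp only [tmul_zero, map_zero, LinearMap.zero_apply, LinearMap.zero_comp,
        TensorProduct.map_zero_left]
    | add u v hu hv =>
      simp only [tmul_add, map_add, LinearMap.add_apply, LinearMap.add_comp,
        TensorProduct.map_add_left, hu, hv]
    | tmul φ' ψ' =>
      simp only [TensorProduct.assoc_tmul, TensorProduct.map_tmul,
        LinearMap.comp_apply, TensorProduct.assoc_symm_tmul, LinearMap.id_coe,
        id_eq, Emap, TensorProduct.dualDistrib_apply, convOp,
        LinearEquiv.coe_coe, TensorProduct.comm_tmul, LinearMap.lcomp_apply]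
      generalize Coalgebra.comul (R := R) b = w
      induction w using TensorProduct.induction_on with
      | zero => simp
      | add u v hu hv => simp [map_add, hu, hv, mul_add, add_mul]
      | tmul u v =>
        simp only [TensorProduct.dualDistrib_apply, TensorProduct.map_tmul,
          LinearMap.comp_apply, TensorProduct.mk_apply, LinearMap.flip_apply,
          LinearMap.mul'_apply, TensorProduct.dualDistrib_apply]
        ring

end AuxLM

/-- A finite (finitely generated projective) prebialgebra `H` satisfies
(lm) if and only if the dual prebialgebra `H*` (with opposite convolution product and
comultiplication `Δ*` dual to the multiplication of `H`) satisfies (lc), i.e.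
`Δ*²(ε) = ε₍₁₎ ⊗ ε₍₂₎ε₍₁'₎ ⊗ ε₍₂'₎`. -/
theorem finite_lm_iff_dual_lc
    (R H : Type) [CommRing R] [Ring H] [Algebra R H] [Coalgebra R H]
    [Module.Finite R H] [Module.Projective R H]
    (hpre : ComulMul R H)
    (Δs : (H →ₗ[R] R) →ₗ[R] (H →ₗ[R] R) ⊗[R] (H →ₗ[R] R))
    (hΔs : ∀ (φ : H →ₗ[R] R) (h k : H),
      TensorProduct.dualDistrib R H H (Δs φ) (k ⊗ₜ[R] h) = φ (h * k)) :
    LM R H ↔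
      (TensorProduct.map LinearMap.id Δs) (Δs (Coalgebra.counit (R := R))) =
        (TensorProduct.map LinearMap.id
            ((TensorProduct.map (convOp R H) LinearMap.id) ∘ₗ
              (TensorProduct.assoc R (H →ₗ[R] R) (H →ₗ[R] R) (H →ₗ[R] R)).symm.toLinearMap))
          ((TensorProduct.assoc R (H →ₗ[R] R) (H →ₗ[R] R)
              ((H →ₗ[R] R) ⊗[R] (H →ₗ[R] R)))
            (Δs (Coalgebra.counit (R := R)) ⊗ₜ[R] Δs (Coalgebra.counit (R := R)))) := by
  classical
  constructor
  · intro hLM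
    obtain ⟨n, f, g, -, -, hfg⟩ := Module.Finite.exists_comp_eq_id_of_projective R H
    set x : Fin n → H := fun i => f (Pi.single i 1) with hxdef
    set df : Fin n → (H →ₗ[R] R) := fun i => LinearMap.proj i ∘ₗ g with hdfdef
    have hx : ∀ m : H, ∑ i, df i m • x i = m := by
      intro m
      have : ∑ i, df i m • x i = f (∑ i, Pi.single i (g m i)) := by
        rw [map_sum]
        refine Finset.sum_congr rfl fun i _ => ?_
        rw [← map_smul]
        congr 1
        ext j
        by_cases h : j = i <;> simp [Pi.single_apply, h, hdfdef, mul_comm]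
      rw [this, Finset.univ_sum_single (g m)]
      exact DFunLike.congr_fun hfg m
    rw [triple_expand hx ((TensorProduct.map LinearMap.id Δs) (Δs (Coalgebra.counit (R := R)))),
      triple_expand hx ((TensorProduct.map LinearMap.id
            ((TensorProduct.map (convOp R H) LinearMap.id) ∘ₗ
              (TensorProduct.assoc R (H →ₗ[R] R) (H →ₗ[R] R) (H →ₗ[R] R)).symm.toLinearMap))
          ((TensorProduct.assoc R (H →ₗ[R] R) (H →ₗ[R] R)
              ((H →ₗ[R] R) ⊗[R] (H →ₗ[R] R)))
            (Δs (Coalgebra.counit (R := R)) ⊗ₜ[R] Δs (Coalgebra.counit (R := R)))))]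
    refine Finset.sum_congr rfl fun i _ => Finset.sum_congr rfl fun j _ =>
      Finset.sum_congr rfl fun k _ => ?_
    congr 1
    rw [eval_one Δs hΔs, eval_two, hΔs Coalgebra.counit (x k * x j) (x i)]
    have h1 : TensorProduct.dualDistrib R H H (Δs (Coalgebra.counit (R := R))) ∘ₗ
        (TensorProduct.mk R H H).flip (x k) =
        (Coalgebra.counit (R := R)) ∘ₗ LinearMap.mulLeft R (x k) := by
      ext y; exact hΔs Coalgebra.counit (x k) y
    have h2 : TensorProduct.dualDistrib R H H (Δs (Coalgebra.counit (R := R))) ∘ₗ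
        TensorProduct.mk R H H (x i) =
        (Coalgebra.counit (R := R)) ∘ₗ LinearMap.mulRight R (x i) := by
      ext y; exact hΔs Coalgebra.counit y (x i)
    rw [h1, h2]
    exact hLM (x k) (x j) (x i)
  · intro heq h k l
    have := congrArg (fun T => Emap R H T (l ⊗ₜ[R] (k ⊗ₜ[R] h))) heq
    rw [eval_one Δs hΔs, eval_two, hΔs Coalgebra.counit (h * k) l] at this
    have h1 : TensorProduct.dualDistrib R H H (Δs (Coalgebra.counit (R := R))) ∘ₗ
        (TensorProduct.mk R H H).flip h =
        (Coalgebra.counit (R := R)) ∘ₗ LinearMap.mulLeft R h := by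
      ext y; exact hΔs Coalgebra.counit h y
    have h2 : TensorProduct.dualDistrib R H H (Δs (Coalgebra.counit (R := R))) ∘ₗ
        TensorProduct.mk R H H l =
        (Coalgebra.counit (R := R)) ∘ₗ LinearMap.mulRight R l := by
      ext y; exact hΔs Coalgebra.counit y l
    rw [h1, h2] at this
    exact this
end

section
/- Let H be a prebialgebra and define ε_t(h) = ε(1₍₁₎h)1₍₂₎. Then H satisfies the right monoidality axiom (rm): ε(hkl) = ε(hk₍₂₎)ε(k₍₁₎l) for all h,k,l ∈ H, if and only if h·ε_t(g) = ε(h₍₁₎g)h₍₂₎ for all h,g ∈ H. -/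
open TensorProduct Coalgebra

section RmAux

variable (R H : Type) [CommRing R] [Ring H] [Algebra R H] [Coalgebra R H]

local notation "ε" => Coalgebra.counit (R := R) (A := H)
local notation "Δ" => Coalgebra.comul (R := R) (A := H)

lemma aux_sum_mul (g : H) {ι : Type*} (s : Finset ι) (a b : ι → H) :
    (TensorProduct.lid R H) ((TensorProduct.map Coalgebra.counit LinearMap.id)
      ((∑ i ∈ s, a i ⊗ₜ[R] b i) * (g ⊗ₜ[R] (1:H)))) =
    ∑ i ∈ s, ε (a i * g) • b i := by
  simp [Finset.sum_mul, Algebra.TensorProduct.tmul_mul_tmul, map_sum]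

lemma aux_sum_mul_tmul {ι : Type*} (s : Finset ι) (c d : ι → H) (v w : H) :
    (TensorProduct.lid R H) ((TensorProduct.map Coalgebra.counit LinearMap.id)
      ((∑ q ∈ s, c q ⊗ₜ[R] d q) * (v ⊗ₜ[R] w))) =
    ∑ q ∈ s, ε (c q * v) • (d q * w) := by
  simp [Finset.sum_mul, Algebra.TensorProduct.tmul_mul_tmul, map_sum]

lemma aux_mul_sum₂ {ι κ : Type*} (s : Finset ι) (t : Finset κ) (a b : ι → H) (c d : κ → H) :
    (TensorProduct.lid R H) ((TensorProduct.map Coalgebra.counit LinearMap.id)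
      ((∑ i ∈ s, a i ⊗ₜ[R] b i) * (∑ j ∈ t, c j ⊗ₜ[R] d j))) =
    ∑ i ∈ s, ∑ j ∈ t, ε (a i * c j) • (b i * d j) := by
  simp [Finset.sum_mul, Finset.mul_sum, Algebra.TensorProduct.tmul_mul_tmul, map_sum]
  exact Finset.sum_comm

lemma aux_mul_sum₃ (g : H) {ι κ : Type*} (s : Finset ι) (t : Finset κ)
    (a b : ι → H) (c d : κ → H) :
    (TensorProduct.lid R H) ((TensorProduct.map Coalgebra.counit LinearMap.id)
      ((∑ i ∈ s, a i ⊗ₜ[R] b i) * (∑ j ∈ t, c j ⊗ₜ[R] d j) * (g ⊗ₜ[R] (1:H)))) =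
    ∑ i ∈ s, ∑ j ∈ t, ε (a i * c j * g) • (b i * d j) := by
  simp [Finset.sum_mul, Finset.mul_sum, Algebra.TensorProduct.tmul_mul_tmul, map_sum]
  exact Finset.sum_comm

lemma counit_right_sum (a : H) (repr : Coalgebra.Repr R a (H × H)) :
    ∑ i ∈ repr.index, ε (repr.right i) • repr.left i = a := by
  have := congrArg (TensorProduct.rid R H) (Coalgebra.sum_tmul_counit_eq repr)
  simpa only [map_sum, TensorProduct.rid_tmul] using this.trans (by simp)

lemma counit_left_apply (x : H) :
    (TensorProduct.lid R H) ((TensorProduct.map Coalgebra.counit LinearMap.id) (Δ x)) = x := by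
  rw [show (TensorProduct.map (Coalgebra.counit (R := R) (A := H)) LinearMap.id)
      = LinearMap.rTensor H Coalgebra.counit from rfl, Coalgebra.rTensor_counit_comul]
  simp

lemma rm_sum (hRM : RM R H) (h k l : H) (r : Coalgebra.Repr R k (H × H)) :
    ε (h * k * l) = ∑ i ∈ r.index, ε (r.left i * l) * ε (h * r.right i) := by
  rw [hRM h k l, ← r.eq]
  simp [LinearMap.mul'_apply]

lemma mul_expand (hpre : ComulMul R H) (h x : H) (rh : Coalgebra.Repr R h (H × H))
    (rx : Coalgebra.Repr R x (H × H)) :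
    h * x = ∑ q ∈ rh.index, ∑ j ∈ rx.index,
      ε (rh.left q * rx.left j) • (rh.right q * rx.right j) := by
  conv_lhs => rw [← counit_left_apply R H (h * x)]
  rw [hpre h x, ← rh.eq, ← rx.eq, aux_mul_sum₂]

lemma epsT_sum (g : H) (r1 : Coalgebra.Repr R (1 : H) (H × H)) :
    epsT R H g = ∑ i ∈ r1.index, ε (r1.left i * g) • r1.right i := by
  unfold epsT
  simp only [LinearMap.coe_comp, Function.comp_apply, AlgHom.toLinearMap_apply,
    Algebra.TensorProduct.includeLeft_apply, LinearMap.mulLeft_apply,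
    LinearEquiv.coe_coe]
  rw [← r1.eq, aux_sum_mul]

/-- The auxiliary linear map `u ⊗ (v ⊗ w) ↦ ε(ug) • lid (map ε id (z * (v ⊗ w)))`. -/
noncomputable def PhiAux (z : H ⊗[R] H) (g : H) : H ⊗[R] (H ⊗[R] H) →ₗ[R] H :=
  (TensorProduct.lid R H).toLinearMap ∘ₗ
    TensorProduct.map (Coalgebra.counit ∘ₗ LinearMap.mulRight R g)
      ((TensorProduct.lid R H).toLinearMap ∘ₗ
        TensorProduct.map Coalgebra.counit LinearMap.id ∘ₗ LinearMap.mulLeft R z)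

lemma PhiAux_tmul (z : H ⊗[R] H) (g u v w : H) :
    PhiAux R H z g (u ⊗ₜ[R] (v ⊗ₜ[R] w)) =
      ε (u * g) • (TensorProduct.lid R H)
        ((TensorProduct.map Coalgebra.counit LinearMap.id) (z * (v ⊗ₜ[R] w))) := by
  simp [PhiAux]

end RmAux

/-- For a prebialgebra `H`, (rm) holds iff
`h·ε_t(g) = ε(h₍₁₎g)h₍₂₎` for all `h,g ∈ H`. -/
theorem rm_iff_epsT_mul
    (R H : Type) [CommRing R] [Ring H] [Algebra R H] [Coalgebra R H]
    (hpre : ComulMul R H) :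
    RM R H ↔
      ∀ h g : H,
        h * epsT R H g =
          (TensorProduct.lid R H)
            ((TensorProduct.map Coalgebra.counit LinearMap.id)
              (Coalgebra.comul (R := R) h * (g ⊗ₜ[R] (1 : H)))) := by
  constructor
  · -- (rm) → the ε_t identity
    intro hRM h g
    classical
    let r1 := ℛ R (1 : H)
    let rh := ℛ R h
    let rL : (i : H × H) → Coalgebra.Repr R (r1.left i) (H × H) := fun i => ℛ R (r1.left i)
    let rR : (i : H × H) → Coalgebra.Repr R (r1.right i) (H × H) := fun i => ℛ R (r1.right i)
    have lhs_eq : h * epsT R H g =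
        ∑ i ∈ r1.index, ∑ j ∈ (rR i).index, ∑ q ∈ rh.index,
          (Coalgebra.counit (R := R) (r1.left i * g) *
            Coalgebra.counit (R := R) (rh.left q * (rR i).left j)) •
              (rh.right q * (rR i).right j) := by
      rw [epsT_sum R H g r1, Finset.mul_sum]
      refine Finset.sum_congr rfl fun i _ => ?_
      rw [mul_smul_comm, mul_expand R H hpre h (r1.right i) rh (rR i), Finset.smul_sum]
      rw [Finset.sum_comm]
      refine Finset.sum_congr rfl fun j _ => ?_
      rw [Finset.smul_sum]
      refine Finset.sum_congr rfl fun q _ => ?_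
      rw [smul_smul]
    have rhs_eq : (TensorProduct.lid R H)
          ((TensorProduct.map Coalgebra.counit LinearMap.id)
            (Coalgebra.comul (R := R) h * (g ⊗ₜ[R] (1 : H)))) =
        ∑ i ∈ r1.index, ∑ j ∈ (rL i).index, ∑ q ∈ rh.index,
          (Coalgebra.counit (R := R) ((rL i).left j * g) *
            Coalgebra.counit (R := R) (rh.left q * (rL i).right j)) •
              (rh.right q * r1.right i) := by
      conv_lhs => rw [show Coalgebra.comul (R := R) h = Coalgebra.comul (R := R) (h * 1) by
          rw [mul_one], hpre h 1, ← rh.eq, ← r1.eq]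
      rw [aux_mul_sum₃, Finset.sum_comm]
      refine Finset.sum_congr rfl fun i _ => ?_
      rw [Finset.sum_comm]
      refine Finset.sum_congr rfl fun q _ => ?_
      rw [rm_sum R H hRM (rh.left q) (r1.left i) g (rL i), Finset.sum_smul]
    have key := congrArg (PhiAux R H (∑ q ∈ rh.index, rh.left q ⊗ₜ[R] rh.right q) g)
      (Coalgebra.sum_tmul_tmul_eq r1 rL rR)
    simp only [map_sum, PhiAux_tmul, aux_sum_mul_tmul, Finset.smul_sum, smul_smul] at key
    rw [lhs_eq, rhs_eq]
    exact key.symm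
  · -- the ε_t identity → (rm)
    intro hP h k l
    classical
    let rk := ℛ R k
    let rhk := ℛ R (h * k)
    have e1 : h * k * epsT R H l =
        ∑ q ∈ rhk.index, Coalgebra.counit (R := R) (rhk.left q * l) • rhk.right q := by
      rw [hP (h * k) l, ← rhk.eq, aux_sum_mul]
    have e0 : Coalgebra.counit (R := R) (h * k * l) =
        Coalgebra.counit (R := R) (h * k * epsT R H l) := by
      rw [e1]
      conv_lhs => rw [show h * k = ∑ q ∈ rhk.index,
          Coalgebra.counit (R := R) (rhk.right q) • rhk.left q from
            (counit_right_sum R H (h * k) rhk).symm]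
      rw [Finset.sum_mul, map_sum, map_sum]
      refine Finset.sum_congr rfl fun q _ => ?_
      rw [smul_mul_assoc, map_smul, map_smul, smul_eq_mul, smul_eq_mul, mul_comm]
    have e2 : h * k * epsT R H l =
        ∑ i ∈ rk.index, Coalgebra.counit (R := R) (rk.left i * l) • (h * rk.right i) := by
      rw [mul_assoc, hP k l, ← rk.eq, aux_sum_mul, Finset.mul_sum]
      exact Finset.sum_congr rfl fun i _ => (mul_smul_comm _ _ _)
    rw [e0, e2, map_sum, ← rk.eq]
    simp [LinearMap.mul'_apply]
end

section
/- Let H be a prebialgebra and define ε_t(h) = ε(1₍₁₎h)1₍₂₎. Then H satisfies the right comonoidality axiom (rc): Δ²(1) = 1₍₁₎ ⊗ 1₍₁'₎1₍₂₎ ⊗ 1₍₂'₎, if and only if h₍₁₎ ⊗ ε_t(h₍₂₎) = 1₍₁₎h ⊗ 1₍₂₎ for all h ∈ H. -/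
open TensorProduct Coalgebra

section AuxRC

variable (R H : Type) [CommRing R] [Ring H] [Algebra R H] [Coalgebra R H]

/-- `ι : H ⊗ H → H ⊗ (H ⊗ H)`, `a ⊗ b ↦ a ⊗ (b ⊗ 1)`. -/
noncomputable def iotaMap : H ⊗[R] H →ₗ[R] H ⊗[R] (H ⊗[R] H) :=
  TensorProduct.map LinearMap.id Algebra.TensorProduct.includeLeft.toLinearMap

/-- Apply the counit to the middle factor. -/
noncomputable def EmapAux : H ⊗[R] (H ⊗[R] H) →ₗ[R] H ⊗[R] H :=
  TensorProduct.map LinearMap.id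
    ((TensorProduct.lid R H).toLinearMap ∘ₗ TensorProduct.map Coalgebra.counit LinearMap.id)

/-- `x ⊗ y ↦ ε(y) • x`. -/
noncomputable def cntMap : H ⊗[R] H →ₗ[R] H :=
  (TensorProduct.rid R H).toLinearMap ∘ₗ TensorProduct.map LinearMap.id Coalgebra.counit

variable {R H}

lemma epsT_apply (h : H) :
    epsT R H h = (TensorProduct.lid R H) ((TensorProduct.map Coalgebra.counit LinearMap.id)
      (Coalgebra.comul (R := R) (1 : H) * (h ⊗ₜ[R] (1 : H)))) := rfl

@[simp] lemma iotaMap_tmul (a b : H) :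
    iotaMap R H (a ⊗ₜ[R] b) = a ⊗ₜ[R] (b ⊗ₜ[R] (1 : H)) := by simp [iotaMap]

@[simp] lemma EmapAux_tmul (a u v : H) :
    EmapAux R H (a ⊗ₜ[R] (u ⊗ₜ[R] v)) = Coalgebra.counit (R := R) u • (a ⊗ₜ[R] v) := by
  simp [EmapAux]

@[simp] lemma cntMap_tmul (a b : H) :
    cntMap R H (a ⊗ₜ[R] b) = Coalgebra.counit (R := R) b • a := by simp [cntMap]

lemma cntMap_comul (x : H) : cntMap R H (Coalgebra.comul (R := R) x) = x := by
  have h : (TensorProduct.map (LinearMap.id) (Coalgebra.counit) : H ⊗[R] H →ₗ[R] H ⊗[R] R)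
      (Coalgebra.comul (R := R) x) = x ⊗ₜ[R] (1 : R) :=
    Coalgebra.lTensor_counit_comul (R := R) x
  simp [cntMap, h]

lemma iotaMap_mul (s t : H ⊗[R] H) :
    iotaMap R H (s * t) = iotaMap R H s * iotaMap R H t := by
  have key : ∀ z : H ⊗[R] H, iotaMap R H z =
      (Algebra.TensorProduct.map (AlgHom.id R H)
        (Algebra.TensorProduct.includeLeft (R := R) (A := H) (B := H))) z := by
    intro z
    induction z using TensorProduct.induction_on with
    | zero => simp
    | tmul a b => simp
    | add x y hx hy => simp [map_add, hx, hy]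
  rw [key, key, key, map_mul]

lemma mapEpsT_eq (s : H ⊗[R] H) :
    TensorProduct.map LinearMap.id (epsT R H) s =
      EmapAux R H (((1 : H) ⊗ₜ[R] Coalgebra.comul (R := R) (1 : H)) * iotaMap R H s) := by
  induction s using TensorProduct.induction_on with
  | zero => simp
  | tmul c d =>
    rw [iotaMap_tmul, Algebra.TensorProduct.tmul_mul_tmul, one_mul]
    rw [TensorProduct.map_tmul]
    simp only [EmapAux, TensorProduct.map_tmul, LinearMap.id_coe, id_eq, LinearMap.comp_apply,
      LinearEquiv.coe_coe]
    rw [epsT_apply]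
  | add x y hx hy => simp [map_add, mul_add, hx, hy]

lemma key5 (hpre : ComulMul R H) (h : H) :
    EmapAux R H (comulSq1 R H * iotaMap R H (Coalgebra.comul (R := R) h)) =
      Coalgebra.comul (R := R) (1 : H) * (h ⊗ₜ[R] (1 : H)) := by
  classical
  set r := ℛ R (1 : H) with hrdef
  have ra : (i : r.ι) → Coalgebra.Repr R (r.left i) (H × H) := fun i => ℛ R (r.left i)
  have rb : (i : r.ι) → Coalgebra.Repr R (r.right i) (H × H) := fun i => ℛ R (r.right i)
  set rh := ℛ R h with hrhdef
  have hsq : comulSq1 R H = ∑ i ∈ r.index, ∑ j ∈ (ra i).index,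
      (ra i).left j ⊗ₜ[R] ((ra i).right j ⊗ₜ[R] r.right i) := by
    rw [comulSq1, ← r.eq, map_sum]
    simp only [TensorProduct.map_tmul, LinearMap.id_coe, id_eq]
    rw [Finset.sum_congr rfl (fun i _ => by rw [← (rb i).eq, TensorProduct.tmul_sum])]
    exact (Coalgebra.sum_tmul_tmul_eq r ra rb).symm
  have hexp : EmapAux R H (comulSq1 R H * iotaMap R H (Coalgebra.comul (R := R) h)) =
      ∑ i ∈ r.index, ∑ j ∈ (ra i).index, ∑ k ∈ rh.index,
        (Coalgebra.counit (R := R) ((ra i).right j * rh.right k)) •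
          (((ra i).left j * rh.left k) ⊗ₜ[R] r.right i) := by
    rw [hsq, ← rh.eq, map_sum]
    simp only [iotaMap_tmul]
    simp only [Finset.sum_mul, Finset.mul_sum, Algebra.TensorProduct.tmul_mul_tmul, mul_one,
      map_sum, EmapAux_tmul]
    rw [Finset.sum_comm]
    exact Finset.sum_congr rfl fun i _ => Finset.sum_comm
  have htarget : Coalgebra.comul (R := R) (1 : H) * (h ⊗ₜ[R] (1 : H)) =
      ∑ i ∈ r.index, (r.left i * h) ⊗ₜ[R] r.right i := by
    rw [← r.eq, Finset.sum_mul]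
    simp [Algebra.TensorProduct.tmul_mul_tmul]
  rw [hexp, htarget]
  refine Finset.sum_congr rfl fun i _ => ?_
  have h1 : r.left i * h = cntMap R H (Coalgebra.comul (R := R) (r.left i * h)) :=
    (cntMap_comul _).symm
  rw [h1, hpre (r.left i) h, ← (ra i).eq, ← rh.eq, Finset.sum_mul_sum]
  simp [Algebra.TensorProduct.tmul_mul_tmul, map_sum, cntMap_tmul, TensorProduct.sum_tmul,
    smul_tmul']

end AuxRC

/-- For a prebialgebra `H`, (rc) holds iff
`h₍₁₎ ⊗ ε_t(h₍₂₎) = 1₍₁₎h ⊗ 1₍₂₎` for all `h ∈ H`. -/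
theorem rc_iff_epsT_comul
    (R H : Type) [CommRing R] [Ring H] [Algebra R H] [Coalgebra R H]
    (hpre : ComulMul R H) :
    RC R H ↔
      ∀ h : H,
        (TensorProduct.map LinearMap.id (epsT R H)) (Coalgebra.comul (R := R) h) =
          Coalgebra.comul (R := R) (1 : H) * (h ⊗ₜ[R] (1 : H)) := by
  constructor
  · intro hRC h
    have hRC' : comulSq1 R H = d1Right R H * d1Left R H := hRC
    have hmul : Coalgebra.comul (R := R) h =
        Coalgebra.comul (R := R) (1 : H) * Coalgebra.comul (R := R) h := by
      have := hpre 1 h; rwa [one_mul] at this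
    calc (TensorProduct.map LinearMap.id (epsT R H)) (Coalgebra.comul (R := R) h)
        = EmapAux R H (((1 : H) ⊗ₜ[R] Coalgebra.comul (R := R) (1 : H)) *
            iotaMap R H (Coalgebra.comul (R := R) h)) := mapEpsT_eq _
      _ = EmapAux R H (((1 : H) ⊗ₜ[R] Coalgebra.comul (R := R) (1 : H)) *
            iotaMap R H (Coalgebra.comul (R := R) (1 : H) * Coalgebra.comul (R := R) h)) := by
          rw [← hmul]
      _ = EmapAux R H (d1Right R H * (d1Left R H * iotaMap R H (Coalgebra.comul (R := R) h))) := by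
          rw [iotaMap_mul]; rfl
      _ = EmapAux R H ((d1Right R H * d1Left R H) * iotaMap R H (Coalgebra.comul (R := R) h)) := by
          rw [mul_assoc]
      _ = EmapAux R H (comulSq1 R H * iotaMap R H (Coalgebra.comul (R := R) h)) := by
          rw [← hRC']
      _ = Coalgebra.comul (R := R) (1 : H) * (h ⊗ₜ[R] (1 : H)) := key5 hpre h
  · intro hyp
    show comulSq1 R H = d1Right R H * d1Left R H
    classical
    set r := ℛ R (1 : H) with hrdef
    have ra : (i : r.ι) → Coalgebra.Repr R (r.left i) (H × H) := fun i => ℛ R (r.left i)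
    have rb : (i : r.ι) → Coalgebra.Repr R (r.right i) (H × H) := fun i => ℛ R (r.right i)
    -- hypothesis at `1`
    have e1 : ∑ i ∈ r.index, r.left i ⊗ₜ[R] epsT R H (r.right i) =
        ∑ i ∈ r.index, r.left i ⊗ₜ[R] r.right i := by
      have h1 := hyp 1
      rw [← r.eq] at h1
      simpa [map_sum, Finset.sum_mul, Algebra.TensorProduct.tmul_mul_tmul] using h1
    -- push through `assoc ∘ (comul ⊗ id)`
    have hF : ∀ (i : r.ι) (c : H),
        (TensorProduct.assoc R H H H)
          ((TensorProduct.map (Coalgebra.comul) LinearMap.id)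
            (r.left i ⊗ₜ[R] c)) =
          ∑ j ∈ (ra i).index, (ra i).left j ⊗ₜ[R] ((ra i).right j ⊗ₜ[R] c) := by
      intro i c
      rw [TensorProduct.map_tmul, ← (ra i).eq, TensorProduct.sum_tmul]
      simp [TensorProduct.assoc_tmul]
    have e2 : ∑ i ∈ r.index, ∑ j ∈ (ra i).index,
          (ra i).left j ⊗ₜ[R] ((ra i).right j ⊗ₜ[R] epsT R H (r.right i)) =
        ∑ i ∈ r.index, ∑ j ∈ (ra i).index,
          (ra i).left j ⊗ₜ[R] ((ra i).right j ⊗ₜ[R] r.right i) := by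
      have := congrArg (fun z => (TensorProduct.assoc R H H H)
        ((TensorProduct.map (Coalgebra.comul) LinearMap.id) z)) e1
      simp only [map_sum] at this
      rw [Finset.sum_congr rfl (fun i _ => hF i (epsT R H (r.right i))),
        Finset.sum_congr rfl (fun i _ => hF i (r.right i))] at this
      exact this
    -- RHS
    have hRHS : d1Right R H * d1Left R H = ∑ i ∈ r.index, ∑ j ∈ (rb i).index,
        r.left i ⊗ₜ[R] ((rb i).left j ⊗ₜ[R] epsT R H ((rb i).right j)) := by
      have step1 : d1Right R H * d1Left R H =
          ∑ i ∈ r.index, r.left i ⊗ₜ[R]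
            (Coalgebra.comul (R := R) (1 : H) * (r.right i ⊗ₜ[R] (1 : H))) := by
        show ((1 : H) ⊗ₜ[R] Coalgebra.comul (R := R) (1 : H)) *
            (TensorProduct.map LinearMap.id Algebra.TensorProduct.includeLeft.toLinearMap)
              (Coalgebra.comul (R := R) (1 : H)) = _
        rw [← r.eq, map_sum]
        simp [Finset.mul_sum, Algebra.TensorProduct.tmul_mul_tmul]
      rw [step1]
      refine Finset.sum_congr rfl fun i _ => ?_
      rw [← hyp (r.right i), ← (rb i).eq, map_sum]
      simp [TensorProduct.tmul_sum]
    -- LHS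
    have hLHS : comulSq1 R H = ∑ i ∈ r.index, ∑ j ∈ (rb i).index,
        r.left i ⊗ₜ[R] ((rb i).left j ⊗ₜ[R] (rb i).right j) := by
      rw [comulSq1, ← r.eq, map_sum]
      simp only [TensorProduct.map_tmul, LinearMap.id_coe, id_eq]
      exact Finset.sum_congr rfl fun i _ => by rw [← (rb i).eq, TensorProduct.tmul_sum]
    rw [hLHS, hRHS]
    have c1 := Coalgebra.sum_map_tmul_tmul_eq (LinearMap.id (R := R) (M := H))
      (LinearMap.id (R := R) (M := H)) (epsT R H) (1 : H) (repr := r) (a₁ := ra) (a₂ := rb)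
    have c2 := Coalgebra.sum_map_tmul_tmul_eq (LinearMap.id (R := R) (M := H))
      (LinearMap.id (R := R) (M := H)) (LinearMap.id (R := R) (M := H)) (1 : H)
      (repr := r) (a₁ := ra) (a₂ := rb)
    simp only [LinearMap.id_coe, id_eq] at c1 c2
    rw [c2, ← e2, ← c1]
end

section
/- Let H be a prebialgebra satisfying the right comonoidality axiom (rc): Δ²(1) = 1₍₁₎ ⊗ 1₍₁'₎1₍₂₎ ⊗ 1₍₂'₎. Then I_t = H_t = H_L, where I_t = {h ∈ H : Δ(h) = 1₍₁₎h ⊗ 1₍₂₎}, H_t = Im(ε_t) with ε_t(h) = ε(1₍₁₎h)1₍₂₎, and H_L = {⟨h*,1₍₁₎⟩1₍₂₎ : h* ∈ H*}. -/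
open TensorProduct Coalgebra

/-- If a prebialgebra `H` satisfies (rc) then `I_t = H_t = H_L`. -/
theorem rc_It_eq_Ht_eq_HL
    (R H : Type) [CommRing R] [Ring H] [Algebra R H] [Coalgebra R H]
    (hpre : ComulMul R H) (hrc : RC R H) :
    {h : H | Coalgebra.comul (R := R) h =
        Coalgebra.comul (R := R) (1 : H) * (h ⊗ₜ[R] (1 : H))} =
      Set.range (epsT R H) ∧
    Set.range (epsT R H) = Set.range (fmap R H) := by
  obtain ⟨S, hS⟩ := TensorProduct.exists_finset (Coalgebra.comul (R := R) (1 : H))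
  have hepsT : ∀ h : H, epsT R H h =
      ∑ p ∈ S, Coalgebra.counit (R := R) (p.1 * h) • p.2 := by
    intro h
    simp only [epsT, LinearMap.coe_comp, Function.comp_apply, AlgHom.toLinearMap_apply,
      Algebra.TensorProduct.includeLeft_apply, LinearMap.mulLeft_apply, hS,
      Finset.sum_mul, Algebra.TensorProduct.tmul_mul_tmul, mul_one, map_sum,
      TensorProduct.map_tmul, LinearMap.id_coe, id_eq, LinearEquiv.coe_coe,
      TensorProduct.lid_tmul]
  have hfmap : ∀ φ : H →ₗ[R] R, fmap R H φ = ∑ p ∈ S, φ p.1 • p.2 := by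
    intro φ
    simp only [fmap, hS, map_sum, TensorProduct.map_tmul, LinearMap.id_coe, id_eq,
      TensorProduct.lid_tmul]
  have hTf : ∀ h : H, epsT R H h =
      fmap R H (Coalgebra.counit ∘ₗ LinearMap.mulRight R h) := by
    intro h
    rw [hepsT, hfmap]
    simp [LinearMap.mulRight_apply]
  have hIt : ∀ h : H, Coalgebra.comul (R := R) h =
      Coalgebra.comul (R := R) (1 : H) * (h ⊗ₜ[R] (1 : H)) → epsT R H h = h := by
    intro h hh
    have := congrArg (fun x => (TensorProduct.lid R H)
      ((LinearMap.rTensor H (Coalgebra.counit (R := R))) x)) hh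
    simp only [Coalgebra.rTensor_counit_comul, TensorProduct.lid_tmul, one_smul] at this
    conv_rhs => rw [this]
    simp [epsT, LinearMap.rTensor]
  have hfIt : ∀ φ : H →ₗ[R] R, Coalgebra.comul (R := R) (fmap R H φ) =
      Coalgebra.comul (R := R) (1 : H) * (fmap R H φ ⊗ₜ[R] (1 : H)) := by
    intro φ
    have key := congrArg (fun x => (TensorProduct.lid R (H ⊗[R] H))
      ((TensorProduct.map φ LinearMap.id) x)) hrc
    simp only [comulSq1, d1Right, d1Left, hS] at key
    simp only [map_sum, TensorProduct.map_tmul, LinearMap.id_coe, id_eq,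
      TensorProduct.lid_tmul, Finset.mul_sum, Algebra.TensorProduct.tmul_mul_tmul,
      one_mul, AlgHom.toLinearMap_apply, Algebra.TensorProduct.includeLeft_apply] at key
    rw [hfmap, map_sum]
    simp only [map_smul]
    rw [key, hS]
    rw [TensorProduct.sum_tmul, Finset.mul_sum]
    refine Finset.sum_congr rfl fun p _ => ?_
    rw [← TensorProduct.smul_tmul', mul_smul_comm]
  constructor
  · apply Set.Subset.antisymm
    · intro h hh
      exact ⟨h, hIt h hh⟩
    · rintro _ ⟨h, rfl⟩
      rw [hTf h]
      exact hfIt _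
  · apply Set.Subset.antisymm
    · rintro _ ⟨h, rfl⟩
      exact ⟨_, (hTf h).symm⟩
    · rintro _ ⟨φ, rfl⟩
      exact ⟨fmap R H φ, hIt _ (hfIt φ)⟩
end

section
/- Let H be a prebialgebra. If the right monoidality axiom (rm) or the right comonoidality axiom (rc) holds, then the map ε_t: H → H, ε_t(h) = ε(1₍₁₎h)1₍₂₎, is idempotent: ε_t ∘ ε_t = ε_t. -/
open TensorProduct Coalgebra

section AuxEps

variable {R H : Type} [CommRing R] [Ring H] [Algebra R H] [Coalgebra R H]

/-- Auxiliary: `Efun t x = (lid ∘ (ε ⊗ id))(t * (x ⊗ 1))`, so that `epsT x = Efun (Δ1) x`. -/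
noncomputable def Efun (t : H ⊗[R] H) (x : H) : H :=
  TensorProduct.lid R H
    (TensorProduct.map (Coalgebra.counit (R := R)) LinearMap.id (t * (x ⊗ₜ[R] (1 : H))))

lemma epsT_apply_s4 (x : H) :
    epsT R H x = Efun (Coalgebra.comul (R := R) (1 : H)) x := rfl

lemma Efun_zero_left (x : H) : Efun (0 : H ⊗[R] H) x = 0 := by
  simp [Efun]

lemma Efun_add_left (s t : H ⊗[R] H) (x : H) :
    Efun (s + t) x = Efun s x + Efun t x := by
  simp [Efun, add_mul]

lemma Efun_tmul (a b x : H) :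
    Efun (a ⊗ₜ[R] b) x = Coalgebra.counit (R := R) (a * x) • b := by
  simp [Efun, Algebra.TensorProduct.tmul_mul_tmul]

lemma Efun_zero_right (t : H ⊗[R] H) : Efun t (0 : H) = 0 := by
  simp [Efun]

lemma Efun_add_right (t : H ⊗[R] H) (x y : H) :
    Efun t (x + y) = Efun t x + Efun t y := by
  simp [Efun, TensorProduct.add_tmul, mul_add]

lemma Efun_smul_right (t : H ⊗[R] H) (r : R) (x : H) :
    Efun t (r • x) = r • Efun t x := by
  simp [Efun, ← TensorProduct.smul_tmul', mul_smul_comm]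

lemma Efun_congr (t : H ⊗[R] H) {x y : H}
    (hxy : ∀ a : H, Coalgebra.counit (R := R) (a * x) = Coalgebra.counit (R := R) (a * y)) :
    Efun t x = Efun t y := by
  induction t using TensorProduct.induction_on with
  | zero => simp [Efun_zero_left]
  | tmul a b => simp [Efun_tmul, hxy a]
  | add s t hs ht => simp [Efun_add_left, hs, ht]

lemma counit_mul_Efun (t : H ⊗[R] H) (a h : H) :
    Coalgebra.counit (R := R) (a * Efun t h) =
      LinearMap.mul' R R
        (TensorProduct.map (Coalgebra.counit ∘ₗ LinearMap.mulRight R h)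
          (Coalgebra.counit ∘ₗ LinearMap.mulLeft R a) t) := by
  induction t using TensorProduct.induction_on with
  | zero => simp [Efun_zero_left]
  | tmul c d => simp [Efun_tmul, mul_smul_comm, LinearMap.mul'_apply, mul_comm]
  | add s t hs ht => simp [Efun_add_left, mul_add, hs, ht]

/-- Auxiliary linear map `a ⊗ (b ⊗ c) ↦ ε(ah)ε(b)c`. -/
noncomputable def Phi (h : H) : H ⊗[R] (H ⊗[R] H) →ₗ[R] H :=
  (TensorProduct.lid R H).toLinearMap ∘ₗ
    TensorProduct.map (Coalgebra.counit ∘ₗ LinearMap.mulRight R h)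
      ((TensorProduct.lid R H).toLinearMap ∘ₗ
        TensorProduct.map Coalgebra.counit LinearMap.id)

lemma lid_map_counit_comul (b : H) :
    TensorProduct.lid R H
      (TensorProduct.map (Coalgebra.counit (R := R)) LinearMap.id
        (Coalgebra.comul (R := R) b)) = b := by
  rw [show TensorProduct.map (Coalgebra.counit (R := R)) (LinearMap.id : H →ₗ[R] H)
      = LinearMap.rTensor H Coalgebra.counit from rfl,
    Coalgebra.rTensor_counit_comul]
  simp

lemma Phi_comul (h : H) (t : H ⊗[R] H) :
    Phi h (TensorProduct.map LinearMap.id Coalgebra.comul t) = Efun t h := by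
  induction t using TensorProduct.induction_on with
  | zero => simp [Efun_zero_left]
  | tmul a b => simp [Phi, lid_map_counit_comul, Efun_tmul]
  | add s t hs ht => simp only [map_add, Efun_add_left, hs, ht]

lemma Phi_mul (h : H) (s t : H ⊗[R] H) :
    Phi h ((((1 : H) ⊗ₜ[R] s : H ⊗[R] (H ⊗[R] H))) *
        TensorProduct.map LinearMap.id Algebra.TensorProduct.includeLeft.toLinearMap t) =
      Efun s (Efun t h) := by
  induction t using TensorProduct.induction_on with
  | zero => simp [Efun_zero_left, Efun_zero_right]
  | tmul a b =>
    have : (((1 : H) ⊗ₜ[R] s : H ⊗[R] (H ⊗[R] H))) * (a ⊗ₜ[R] (b ⊗ₜ[R] (1 : H)))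
        = a ⊗ₜ[R] (s * (b ⊗ₜ[R] (1 : H))) := by
      rw [Algebra.TensorProduct.tmul_mul_tmul, one_mul]
    simp only [TensorProduct.map_tmul, LinearMap.id_coe, id_eq,
      Algebra.TensorProduct.includeLeft_apply, this, Efun_tmul, Efun_smul_right]
    simp [Phi, Efun]
  | add x y hx hy =>
    simp only [map_add, mul_add, Efun_add_left, hx, hy, Efun_add_right]

end AuxEps

/-- If a prebialgebra `H` satisfies (rm) or (rc), then `ε_t` is idempotent. -/
theorem epsT_idempotent
    (R H : Type) [CommRing R] [Ring H] [Algebra R H] [Coalgebra R H]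
    (hpre : ComulMul R H) (hax : RM R H ∨ RC R H) :
    epsT R H ∘ₗ epsT R H = epsT R H := by
  ext h
  rw [LinearMap.comp_apply, epsT_apply_s4, epsT_apply_s4]
  rcases hax with hrm | hrc
  · apply Efun_congr
    intro a
    rw [counit_mul_Efun, ← hrm a 1 h, mul_one]
  · have h1 : Phi h (comulSq1 R H) = Efun (Coalgebra.comul (R := R) (1 : H)) h :=
      Phi_comul h _
    have h2 : Phi h (d1Right R H * d1Left R H) =
        Efun (Coalgebra.comul (R := R) (1 : H))
          (Efun (Coalgebra.comul (R := R) (1 : H)) h) :=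
      Phi_mul h _ _
    rw [← h2, ← hrc, h1]
end

section
/- In any prebialgebra H, one has ε_s(1₍₁₎) ⊗ 1₍₂₎ = 1₍₁₎ ⊗ ε_t(1₍₂₎), where ε_t(h) = ε(1₍₁₎h)1₍₂₎ and ε_s(h) = ε(h1₍₂₎)1₍₁₎. -/
open TensorProduct Coalgebra

section Aux

variable (R H : Type) [CommRing R] [Ring H] [Algebra R H] [Coalgebra R H]

/-- Generalized source map: `φ_s(x) = (id ⊗ ε)((1 ⊗ x) * s)`. -/
noncomputable def phiAux (s : H ⊗[R] H) : H →ₗ[R] H :=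
  (TensorProduct.rid R H).toLinearMap ∘ₗ
    TensorProduct.map LinearMap.id Coalgebra.counit ∘ₗ
    LinearMap.mulRight R s ∘ₗ
    Algebra.TensorProduct.includeRight.toLinearMap

/-- Generalized target map: `ψ_t(x) = (ε ⊗ id)(t * (x ⊗ 1))`. -/
noncomputable def psiAux (t : H ⊗[R] H) : H →ₗ[R] H :=
  (TensorProduct.lid R H).toLinearMap ∘ₗ
    TensorProduct.map Coalgebra.counit LinearMap.id ∘ₗ
    LinearMap.mulLeft R t ∘ₗ
    Algebra.TensorProduct.includeLeft.toLinearMap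

lemma phiAux_zero : phiAux R H 0 = 0 := by
  ext x; simp [phiAux]

lemma phiAux_add (s₁ s₂ : H ⊗[R] H) :
    phiAux R H (s₁ + s₂) = phiAux R H s₁ + phiAux R H s₂ := by
  ext x; simp [phiAux, mul_add]

lemma psiAux_zero : psiAux R H 0 = 0 := by
  ext x; simp [psiAux]

lemma psiAux_add (t₁ t₂ : H ⊗[R] H) :
    psiAux R H (t₁ + t₂) = psiAux R H t₁ + psiAux R H t₂ := by
  ext x; simp [psiAux, add_mul]

lemma key_aux (s t : H ⊗[R] H) :
    TensorProduct.map (phiAux R H s) LinearMap.id t =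
      TensorProduct.map LinearMap.id (psiAux R H t) s := by
  induction s using TensorProduct.induction_on with
  | zero => simp [phiAux_zero]
  | add s₁ s₂ h₁ h₂ =>
      rw [phiAux_add]
      simp only [map_add]
      rw [TensorProduct.map_add_left, LinearMap.add_apply, h₁, h₂]
  | tmul a b =>
      induction t using TensorProduct.induction_on with
      | zero => simp [psiAux_zero]
      | add t₁ t₂ h₁ h₂ =>
          rw [psiAux_add]
          simp only [map_add]
          rw [TensorProduct.map_add_right, LinearMap.add_apply, h₁, h₂]
      | tmul c d =>
          simp [phiAux, psiAux, Algebra.TensorProduct.tmul_mul_tmul,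
            TensorProduct.smul_tmul]

lemma epsS_eq_phiAux : epsS R H = phiAux R H (Coalgebra.comul (R := R) (1 : H)) := rfl

lemma epsT_eq_psiAux : epsT R H = psiAux R H (Coalgebra.comul (R := R) (1 : H)) := rfl

end Aux

/-- In any prebialgebra, `ε_s(1₍₁₎) ⊗ 1₍₂₎ = 1₍₁₎ ⊗ ε_t(1₍₂₎)`. -/
theorem epsS_one_tmul_eq
    (R H : Type) [CommRing R] [Ring H] [Algebra R H] [Coalgebra R H]
    (hpre : ComulMul R H) :
    (TensorProduct.map (epsS R H) LinearMap.id) (Coalgebra.comul (R := R) (1 : H)) =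
      (TensorProduct.map LinearMap.id (epsT R H)) (Coalgebra.comul (R := R) (1 : H)) := by
  rw [epsS_eq_phiAux, epsT_eq_psiAux]
  exact key_aux R H _ _
end

section
/- Let H be a prebialgebra satisfying the right monoidality axiom (rm): ε(hkl)=ε(hk₍₂₎)ε(k₍₁₎l). Then for all h,g ∈ H: ε_t(h)ε_t(g) = ε_t(ε_t(h)g) and ε_s(h)ε_s(g) = ε_s(hε_s(g)). Consequently H_t = Im(ε_t) and H_s = Im(ε_s) are subalgebras of H. -/
open TensorProduct Coalgebra

section RMToolkit

variable {R H : Type} [CommRing R] [Ring H] [Algebra R H] [Coalgebra R H]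
variable {ι ι' : Type*} {κ Λ : ι → Type*}

local notation "ε" => (Coalgebra.counit (R := R) (A := H))

/-- scalar form of the left counit axiom -/
lemma counit_smul_left {x : H} (rx : Coalgebra.Repr R x ι) :
    ∑ i ∈ rx.index, ε (rx.left i) • rx.right i = x := by
  have h := Coalgebra.sum_counit_tmul_eq (R := R) rx
  calc ∑ i ∈ rx.index, ε (rx.left i) • rx.right i
      = TensorProduct.lid R H (∑ i ∈ rx.index, ε (rx.left i) ⊗ₜ[R] rx.right i) := by
        rw [map_sum]; simp
    _ = TensorProduct.lid R H ((1:R) ⊗ₜ[R] x) := by rw [h]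
    _ = x := by simp

/-- scalar form of the right counit axiom -/
lemma counit_smul_right {x : H} (rx : Coalgebra.Repr R x ι) :
    ∑ i ∈ rx.index, ε (rx.right i) • rx.left i = x := by
  have h := Coalgebra.sum_tmul_counit_eq (R := R) rx
  calc ∑ i ∈ rx.index, ε (rx.right i) • rx.left i
      = TensorProduct.rid R H (∑ i ∈ rx.index, rx.left i ⊗ₜ[R] ε (rx.right i)) := by
        rw [map_sum]; simp
    _ = TensorProduct.rid R H (x ⊗ₜ[R] (1:R)) := by rw [h]
    _ = x := by simp

/-- expansion of comul of a product -/
lemma comul_mul_repr (hpre : ComulMul R H) {z w : H}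
    (rz : Coalgebra.Repr R z ι) (rw : Coalgebra.Repr R w ι') :
    Coalgebra.comul (R := R) (z * w) =
      ∑ i ∈ rz.index, ∑ j ∈ rw.index,
        (rz.left i * rw.left j) ⊗ₜ[R] (rz.right i * rw.right j) := by
  rw [hpre z w, ← rz.eq, ← rw.eq, Finset.sum_mul_sum]
  simp [Algebra.TensorProduct.tmul_mul_tmul]

/-- sum form of the (rm) axiom -/
lemma rm_repr (hrm : RM R H) (h l' : H) {k : H} (rk : Coalgebra.Repr R k ι) :
    ε (h * k * l') = ∑ i ∈ rk.index, ε (rk.left i * l') * ε (h * rk.right i) := by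
  have hh := hrm h k l'
  rw [← rk.eq] at hh
  simpa [map_sum] using hh


/-- a `Repr` for a product, given `ComulMul` -/
noncomputable def Coalgebra.Repr.mulRepr (hpre : ComulMul R H) {z w : H}
    (rz : Coalgebra.Repr R z ι) (rw : Coalgebra.Repr R w ι') : Coalgebra.Repr R (z * w) (ι × ι') where
  index := rz.index ×ˢ rw.index
  left p := rz.left p.1 * rw.left p.2
  right p := rz.right p.1 * rw.right p.2
  eq := by rw [comul_mul_repr hpre rz rw, ← Finset.sum_product']

/-- counit reinsertion, left form -/
lemma mul_eq_sum_counit_left (hpre : ComulMul R H) {z w : H}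
    (rz : Coalgebra.Repr R z ι) (rw : Coalgebra.Repr R w ι') :
    z * w = ∑ i ∈ rz.index, ∑ j ∈ rw.index,
      ε (rz.left i * rw.left j) • (rz.right i * rw.right j) := by
  have h := counit_smul_left (Coalgebra.Repr.mulRepr hpre rz rw)
  simpa [Coalgebra.Repr.mulRepr, Finset.sum_product] using h.symm

/-- counit reinsertion, right form -/
lemma mul_eq_sum_counit_right (hpre : ComulMul R H) {z w : H}
    (rz : Coalgebra.Repr R z ι) (rw : Coalgebra.Repr R w ι') :
    z * w = ∑ i ∈ rz.index, ∑ j ∈ rw.index,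
      ε (rz.right i * rw.right j) • (rz.left i * rw.left j) := by
  have h := counit_smul_right (Coalgebra.Repr.mulRepr hpre rz rw)
  simpa [Coalgebra.Repr.mulRepr, Finset.sum_product] using h.symm

/-- counit-merge, left form: `∑ ε(z₁w₁) ε(z₂w₂c) = ε(zwc)` -/
lemma merge_left (hpre : ComulMul R H) {z w : H} (c : H)
    (rz : Coalgebra.Repr R z ι) (rw : Coalgebra.Repr R w ι') :
    ∑ i ∈ rz.index, ∑ j ∈ rw.index,
      ε (rz.left i * rw.left j) * ε (rz.right i * rw.right j * c) = ε (z * w * c) := by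
  have h : ∀ (x : H) (rx : Coalgebra.Repr R x (ι × ι')),
      ∑ i ∈ rx.index, ε (rx.left i) * ε (rx.right i * c) = ε (x * c) := by
    intro x rx
    have h0 := counit_smul_left rx
    calc ∑ i ∈ rx.index, ε (rx.left i) * ε (rx.right i * c)
        = ε ((∑ i ∈ rx.index, ε (rx.left i) • rx.right i) * c) := by
          rw [Finset.sum_mul, map_sum]
          refine Finset.sum_congr rfl fun i _ => ?_
          rw [smul_mul_assoc, map_smul, smul_eq_mul]
      _ = ε (x * c) := by rw [h0]
  have h2 := h (z*w) (Coalgebra.Repr.mulRepr hpre rz rw)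
  simpa [Coalgebra.Repr.mulRepr, Finset.sum_product] using h2

/-- counit-merge, right form: `∑ ε(z₂w₂) ε(c·z₁w₁) = ε(c·z·w)` -/
lemma merge_right (hpre : ComulMul R H) {z w : H} (c : H)
    (rz : Coalgebra.Repr R z ι) (rw : Coalgebra.Repr R w ι') :
    ∑ i ∈ rz.index, ∑ j ∈ rw.index,
      ε (rz.right i * rw.right j) * ε (c * (rz.left i * rw.left j)) = ε (c * (z * w)) := by
  have h : ∀ (x : H) (rx : Coalgebra.Repr R x (ι × ι')),
      ∑ i ∈ rx.index, ε (rx.right i) * ε (c * rx.left i) = ε (c * x) := by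
    intro x rx
    have h0 := counit_smul_right rx
    calc ∑ i ∈ rx.index, ε (rx.right i) * ε (c * rx.left i)
        = ε (c * (∑ i ∈ rx.index, ε (rx.right i) • rx.left i)) := by
          rw [Finset.mul_sum, map_sum]
          refine Finset.sum_congr rfl fun i _ => ?_
          rw [mul_smul_comm, map_smul, smul_eq_mul]
      _ = ε (c * x) := by rw [h0]
  have h2 := h (z*w) (Coalgebra.Repr.mulRepr hpre rz rw)
  simpa [Coalgebra.Repr.mulRepr, Finset.sum_product] using h2


section Kmaps
variable (R H)
/-- contraction `x ⊗ (y ⊗ z) ↦ f x • (g y • m z)` -/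
noncomputable def K3H (f g : H →ₗ[R] R) (m : H →ₗ[R] H) :
    H ⊗[R] (H ⊗[R] H) →ₗ[R] H :=
  (TensorProduct.lid R H).toLinearMap ∘ₗ
    TensorProduct.map f ((TensorProduct.lid R H).toLinearMap ∘ₗ TensorProduct.map g m)

/-- contraction `x ⊗ (y ⊗ z) ↦ f x * (g y * h z)` -/
noncomputable def K3S (f g h : H →ₗ[R] R) : H ⊗[R] (H ⊗[R] H) →ₗ[R] R :=
  (LinearMap.mul' R R) ∘ₗ
    TensorProduct.map f ((LinearMap.mul' R R) ∘ₗ TensorProduct.map g h)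

/-- contraction `x ⊗ (y ⊗ z) ↦ (f y * g z) • m x` -/
noncomputable def K3F (m : H →ₗ[R] H) (f g : H →ₗ[R] R) :
    H ⊗[R] (H ⊗[R] H) →ₗ[R] H :=
  (TensorProduct.rid R H).toLinearMap ∘ₗ
    TensorProduct.map m ((LinearMap.mul' R R) ∘ₗ TensorProduct.map f g)

/-- contraction `p ⊗ q ↦ f p • m q` -/
noncomputable def K2H (f : H →ₗ[R] R) (m : H →ₗ[R] H) : H ⊗[R] H →ₗ[R] H :=
  (TensorProduct.lid R H).toLinearMap ∘ₗ TensorProduct.map f m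

/-- contraction `p ⊗ q ↦ f q • m p` -/
noncomputable def K2F (m : H →ₗ[R] H) (f : H →ₗ[R] R) : H ⊗[R] H →ₗ[R] H :=
  (TensorProduct.rid R H).toLinearMap ∘ₗ TensorProduct.map m f

/-- contraction `p ⊗ q ↦ f p * g q` -/
noncomputable def K2S (f g : H →ₗ[R] R) : H ⊗[R] H →ₗ[R] R :=
  (LinearMap.mul' R R) ∘ₗ TensorProduct.map f g
end Kmaps

@[simp] lemma K3H_tmul (f g : H →ₗ[R] R) (m : H →ₗ[R] H) (x y z : H) :
    K3H R H f g m (x ⊗ₜ[R] (y ⊗ₜ[R] z)) = f x • (g y • m z) := by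
  simp only [K3H, LinearMap.comp_apply, TensorProduct.map_tmul, LinearEquiv.coe_coe,
    TensorProduct.lid_tmul]

@[simp] lemma K3S_tmul (f g h : H →ₗ[R] R) (x y z : H) :
    K3S R H f g h (x ⊗ₜ[R] (y ⊗ₜ[R] z)) = f x * (g y * h z) := by
  simp [K3S]

@[simp] lemma K3F_tmul (m : H →ₗ[R] H) (f g : H →ₗ[R] R) (x y z : H) :
    K3F R H m f g (x ⊗ₜ[R] (y ⊗ₜ[R] z)) = (f y * g z) • m x := by
  simp [K3F]

@[simp] lemma K2H_tmul (f : H →ₗ[R] R) (m : H →ₗ[R] H) (p q : H) :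
    K2H R H f m (p ⊗ₜ[R] q) = f p • m q := by simp [K2H]

@[simp] lemma K2F_tmul (m : H →ₗ[R] H) (f : H →ₗ[R] R) (p q : H) :
    K2F R H m f (p ⊗ₜ[R] q) = f q • m p := by simp [K2F]

@[simp] lemma K2S_tmul (f g : H →ₗ[R] R) (p q : H) :
    K2S R H f g (p ⊗ₜ[R] q) = f p * g q := by simp [K2S]

/-- coassociativity switch: for any linear map `Ψ` on `H ⊗ (H ⊗ H)`. -/
lemma switch3 {M : Type} [AddCommGroup M] [Module R M]
    (Ψ : H ⊗[R] (H ⊗[R] H) →ₗ[R] M)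
    {x : H} (rx : Coalgebra.Repr R x ι)
    (tf : ∀ i : rx.ι, Coalgebra.Repr R (rx.left i) (κ i))
    (sf : ∀ i : rx.ι, Coalgebra.Repr R (rx.right i) (Λ i)) :
    ∑ i ∈ rx.index, ∑ j ∈ (tf i).index,
        Ψ ((tf i).left j ⊗ₜ[R] ((tf i).right j ⊗ₜ[R] rx.right i))
      = ∑ i ∈ rx.index, ∑ j ∈ (sf i).index,
        Ψ (rx.left i ⊗ₜ[R] ((sf i).left j ⊗ₜ[R] (sf i).right j)) := by
  have h := Coalgebra.sum_tmul_tmul_eq rx tf sf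
  have h2 := congrArg Ψ h
  simpa [map_sum] using h2

/-- conversion: sum of `Φ` over a representation equals `Φ (comul x)` -/
lemma sum_apply_comul {M : Type} [AddCommGroup M] [Module R M]
    (Φ : H ⊗[R] H →ₗ[R] M) {x : H} (rx : Coalgebra.Repr R x ι) :
    ∑ i ∈ rx.index, Φ (rx.left i ⊗ₜ[R] rx.right i) = Φ (Coalgebra.comul (R := R) x) := by
  rw [← rx.eq, map_sum]

/-- conversion for products -/
lemma sum_apply_comul_mul (hpre : ComulMul R H) {M : Type} [AddCommGroup M] [Module R M]
    (Φ : H ⊗[R] H →ₗ[R] M) {z w : H}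
    (rz : Coalgebra.Repr R z ι) (rw : Coalgebra.Repr R w ι') :
    ∑ i ∈ rz.index, ∑ j ∈ rw.index,
        Φ ((rz.left i * rw.left j) ⊗ₜ[R] (rz.right i * rw.right j))
      = Φ (Coalgebra.comul (R := R) (z * w)) := by
  rw [comul_mul_repr hpre rz rw, map_sum]
  exact Finset.sum_congr rfl fun i _ => by rw [map_sum]

/-- the `epsT` map in representation form -/
lemma epsT_repr (r1 : Coalgebra.Repr R (1 : H) ι) (x : H) :
    epsT R H x = ∑ i ∈ r1.index, ε (r1.left i * x) • r1.right i := by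
  have h1 : Coalgebra.comul (R := R) (1:H) * (x ⊗ₜ[R] (1:H)) =
      ∑ i ∈ r1.index, (r1.left i * x) ⊗ₜ[R] (r1.right i) := by
    rw [← r1.eq, Finset.sum_mul]
    simp [Algebra.TensorProduct.tmul_mul_tmul]
  simp only [epsT, LinearMap.comp_apply, AlgHom.toLinearMap_apply,
    Algebra.TensorProduct.includeLeft_apply, LinearMap.mulLeft_apply, h1, map_sum,
    LinearEquiv.coe_coe]
  refine Finset.sum_congr rfl fun i _ => ?_
  simp

/-- the `epsS` map in representation form -/
lemma epsS_repr (r1 : Coalgebra.Repr R (1 : H) ι) (x : H) :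
    epsS R H x = ∑ i ∈ r1.index, ε (x * r1.right i) • r1.left i := by
  have h1 : ((1:H) ⊗ₜ[R] x) * Coalgebra.comul (R := R) (1:H) =
      ∑ i ∈ r1.index, (r1.left i) ⊗ₜ[R] (x * r1.right i) := by
    rw [← r1.eq, Finset.mul_sum]
    simp [Algebra.TensorProduct.tmul_mul_tmul]
  simp only [epsS, LinearMap.comp_apply, AlgHom.toLinearMap_apply,
    Algebra.TensorProduct.includeRight_apply, LinearMap.mulRight_apply, h1, map_sum,
    LinearEquiv.coe_coe]
  refine Finset.sum_congr rfl fun i _ => ?_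
  simp

end RMToolkit
section Claims

variable {R H : Type} [CommRing R] [Ring H] [Algebra R H] [Coalgebra R H]
variable {ι ι' : Type*} {κ Λ : ι → Type*}

local notation "ε" => (Coalgebra.counit (R := R) (A := H))

/-- Step I: `ε_t(a)ε_t(b) = ∑ ε(1₍₁₎a)ε(1₍₂₎b)•1₍₃₎`. -/
lemma epsT_mul_eq_m (hpre : ComulMul R H) (hrm : RM R H) (a b : H)
    (r : Coalgebra.Repr R (1 : H) ι) (s : ∀ i : r.ι, Coalgebra.Repr R (r.right i) (κ i)) :
    epsT R H a * epsT R H b =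
      ∑ i ∈ r.index, ε (r.left i * a) •
        ∑ k ∈ (s i).index, ε ((s i).left k * b) • (s i).right k := by
  classical
  let t : ∀ i : r.ι, Coalgebra.Repr R (r.left i) (H × H) := fun i => ℛ R _
  calc epsT R H a * epsT R H b
      = ∑ i ∈ r.index, ∑ j ∈ r.index,
          (ε (r.left i * a) * ε (r.left j * b)) • (r.right i * r.right j) := by
        rw [epsT_repr r a, epsT_repr r b, Finset.sum_mul_sum]
        exact Finset.sum_congr rfl fun i _ => Finset.sum_congr rfl fun j _ => by
          rw [smul_mul_assoc, mul_smul_comm, smul_smul]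
    _ = ∑ i ∈ r.index, ∑ j ∈ r.index, (ε (r.left i * a) * ε (r.left j * b)) •
          (∑ k ∈ (s i).index, ∑ m ∈ (s j).index,
            ε ((s i).left k * (s j).left m) • ((s i).right k * (s j).right m)) := by
        exact Finset.sum_congr rfl fun i _ => Finset.sum_congr rfl fun j _ => by
          rw [← mul_eq_sum_counit_left hpre (s i) (s j)]
    _ = ∑ i ∈ r.index, ε (r.left i * a) •
          ∑ k ∈ (s i).index, ∑ j ∈ r.index, ∑ m ∈ (s j).index,
            ε (r.left j * b) •
              (ε ((s i).left k * (s j).left m) • ((s i).right k * (s j).right m)) := by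
        simp only [Finset.smul_sum, mul_smul]
        refine Finset.sum_congr rfl fun i _ => ?_
        rw [Finset.sum_comm]
    _ = ∑ i ∈ r.index, ε (r.left i * a) •
          ∑ k ∈ (s i).index, ∑ j ∈ r.index, ∑ m ∈ (t j).index,
            ε ((t j).left m * b) •
              (ε ((s i).left k * (t j).right m) • ((s i).right k * r.right j)) := by
        refine Finset.sum_congr rfl fun i _ => ?_
        congr 1
        refine Finset.sum_congr rfl fun k _ => ?_
        have h := switch3 (K3H R H (ε ∘ₗ LinearMap.mulRight R b)
          (ε ∘ₗ LinearMap.mulLeft R ((s i).left k))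
          (LinearMap.mulLeft R ((s i).right k))) r t s
        simpa using h.symm
    _ = ∑ i ∈ r.index, ε (r.left i * a) •
          ∑ k ∈ (s i).index, ∑ j ∈ r.index,
            ε ((s i).left k * r.left j * b) • ((s i).right k * r.right j) := by
        refine Finset.sum_congr rfl fun i _ => ?_
        congr 1
        refine Finset.sum_congr rfl fun k _ => Finset.sum_congr rfl fun j _ => ?_
        rw [rm_repr hrm ((s i).left k) b (t j), Finset.sum_smul]
        exact Finset.sum_congr rfl fun m _ => by rw [mul_smul]
    _ = ∑ i ∈ r.index, ε (r.left i * a) •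
          ∑ k ∈ (s i).index, ε ((s i).left k * b) • (s i).right k := by
        refine Finset.sum_congr rfl fun i _ => ?_
        congr 1
        have e1 : ∀ k ∈ (s i).index, ∑ j ∈ r.index,
            ε ((s i).left k * r.left j * b) • ((s i).right k * r.right j)
            = ∑ j ∈ r.index, (K2H R H (ε ∘ₗ LinearMap.mulRight R b) LinearMap.id)
                (((s i).left k * r.left j) ⊗ₜ[R] ((s i).right k * r.right j)) := by
          intro k _
          exact Finset.sum_congr rfl fun j _ => by simp
        rw [Finset.sum_congr rfl e1,
          sum_apply_comul_mul hpre (K2H R H (ε ∘ₗ LinearMap.mulRight R b) LinearMap.id) (s i) r,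
          mul_one, ← sum_apply_comul (K2H R H (ε ∘ₗ LinearMap.mulRight R b) LinearMap.id) (s i)]
        exact Finset.sum_congr rfl fun k _ => by simp

/-- Step II: `∑ ε(1₍₁₎a)ε(1₍₂₎b)•1₍₃₎ = ε_t(ε_t(a)b)`. -/
lemma m_eq_epsT_epsT_mul (hpre : ComulMul R H) (hrm : RM R H) (a b : H)
    (r : Coalgebra.Repr R (1 : H) ι) (s : ∀ i : r.ι, Coalgebra.Repr R (r.right i) (κ i)) :
    (∑ i ∈ r.index, ε (r.left i * a) •
        ∑ k ∈ (s i).index, ε ((s i).left k * b) • (s i).right k)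
      = epsT R H (epsT R H a * b) := by
  classical
  let t : ∀ i : r.ι, Coalgebra.Repr R (r.left i) (H × H) := fun i => ℛ R _
  calc (∑ i ∈ r.index, ε (r.left i * a) •
          ∑ k ∈ (s i).index, ε ((s i).left k * b) • (s i).right k)
      = ∑ i ∈ r.index, ∑ k ∈ (t i).index,
          ε ((t i).left k * a) • (ε ((t i).right k * b) • r.right i) := by
        simp only [Finset.smul_sum]
        exact (switch3 (K3H R H (ε ∘ₗ LinearMap.mulRight R a)
          (ε ∘ₗ LinearMap.mulRight R b) LinearMap.id) r t s).symm.trans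
          (by exact Finset.sum_congr rfl fun i _ => Finset.sum_congr rfl fun k _ => by simp)
    _ = ∑ i ∈ r.index,
          (∑ k ∈ (t i).index, ∑ j ∈ r.index,
            ε ((t i).left k * r.left j * a) * ε ((t i).right k * r.right j * b)) • r.right i := by
        refine Finset.sum_congr rfl fun i _ => ?_
        rw [show (∑ k ∈ (t i).index,
            ε ((t i).left k * a) • (ε ((t i).right k * b) • r.right i))
            = (∑ k ∈ (t i).index, ε ((t i).left k * a) * ε ((t i).right k * b)) • r.right i by
          rw [Finset.sum_smul]
          exact Finset.sum_congr rfl fun k _ => (smul_smul _ _ _)]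
        congr 1
        have e1 : ∑ k ∈ (t i).index, ε ((t i).left k * a) * ε ((t i).right k * b)
            = ∑ k ∈ (t i).index, (K2S R H (ε ∘ₗ LinearMap.mulRight R a)
                (ε ∘ₗ LinearMap.mulRight R b)) ((t i).left k ⊗ₜ[R] (t i).right k) := by
          exact Finset.sum_congr rfl fun k _ => by simp
        have e2 : ∑ k ∈ (t i).index, ∑ j ∈ r.index,
            ε ((t i).left k * r.left j * a) * ε ((t i).right k * r.right j * b)
            = ∑ k ∈ (t i).index, ∑ j ∈ r.index, (K2S R H (ε ∘ₗ LinearMap.mulRight R a)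
                (ε ∘ₗ LinearMap.mulRight R b))
                (((t i).left k * r.left j) ⊗ₜ[R] ((t i).right k * r.right j)) := by
          exact Finset.sum_congr rfl fun k _ => Finset.sum_congr rfl fun j _ => by simp
        rw [e2, sum_apply_comul_mul hpre _ (t i) r, mul_one,
          ← sum_apply_comul _ (t i), ← e1]
    _ = ∑ i ∈ r.index,
          (∑ j ∈ r.index, ε (r.left j * a) * (∑ k ∈ (t i).index, ∑ m ∈ (s j).index,
            ε ((t i).left k * (s j).left m) * ε ((t i).right k * (s j).right m * b))) • r.right i := by
        refine Finset.sum_congr rfl fun i _ => ?_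
        congr 1
        have e3 : ∀ k ∈ (t i).index, ∀ j ∈ r.index,
            ε ((t i).left k * r.left j * a) * ε ((t i).right k * r.right j * b)
            = ∑ m ∈ (t j).index, ε ((t j).left m * a) *
                (ε ((t i).left k * (t j).right m) * ε ((t i).right k * r.right j * b)) := by
          intro k _ j _
          rw [rm_repr hrm ((t i).left k) a (t j), Finset.sum_mul]
          exact Finset.sum_congr rfl fun m _ => by ring
        calc ∑ k ∈ (t i).index, ∑ j ∈ r.index,
              ε ((t i).left k * r.left j * a) * ε ((t i).right k * r.right j * b)
            = ∑ k ∈ (t i).index, ∑ j ∈ r.index, ∑ m ∈ (t j).index,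
                (K3S R H (ε ∘ₗ LinearMap.mulRight R a)
                  (ε ∘ₗ LinearMap.mulLeft R ((t i).left k))
                  (ε ∘ₗ LinearMap.mulRight R b ∘ₗ LinearMap.mulLeft R ((t i).right k)))
                  ((t j).left m ⊗ₜ[R] ((t j).right m ⊗ₜ[R] r.right j)) := by
              refine Finset.sum_congr rfl fun k hk => ?_
              refine (Finset.sum_congr rfl (fun j hj => (e3 k hk j hj))).trans ?_
              exact Finset.sum_congr rfl fun j _ => Finset.sum_congr rfl fun m _ => by simp
          _ = ∑ k ∈ (t i).index, ∑ j ∈ r.index, ∑ m ∈ (s j).index,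
                (K3S R H (ε ∘ₗ LinearMap.mulRight R a)
                  (ε ∘ₗ LinearMap.mulLeft R ((t i).left k))
                  (ε ∘ₗ LinearMap.mulRight R b ∘ₗ LinearMap.mulLeft R ((t i).right k)))
                  (r.left j ⊗ₜ[R] ((s j).left m ⊗ₜ[R] (s j).right m)) := by
              exact Finset.sum_congr rfl fun k _ => switch3 _ r t s
          _ = ∑ j ∈ r.index, ε (r.left j * a) * (∑ k ∈ (t i).index, ∑ m ∈ (s j).index,
                ε ((t i).left k * (s j).left m) * ε ((t i).right k * (s j).right m * b)) := by
              rw [Finset.sum_comm]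
              refine Finset.sum_congr rfl fun j _ => ?_
              rw [Finset.mul_sum]
              refine Finset.sum_congr rfl fun k _ => ?_
              rw [Finset.mul_sum]
              exact Finset.sum_congr rfl fun m _ => by simp [mul_assoc]
    _ = ∑ i ∈ r.index,
          (∑ j ∈ r.index, ε (r.left j * a) * ε (r.left i * r.right j * b)) • r.right i := by
        refine Finset.sum_congr rfl fun i _ => ?_
        congr 1
        exact Finset.sum_congr rfl fun j _ => by
          rw [merge_left hpre b (t i) (s j)]
    _ = epsT R H (epsT R H a * b) := by
        rw [epsT_repr r (epsT R H a * b)]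
        refine (Finset.sum_congr rfl fun i _ => ?_).symm
        have e4 : r.left i * (epsT R H a * b)
            = ∑ j ∈ r.index, ε (r.left j * a) • (r.left i * (r.right j * b)) := by
          rw [epsT_repr r a, Finset.sum_mul, Finset.mul_sum]
          exact Finset.sum_congr rfl fun j _ => by
            rw [smul_mul_assoc, mul_smul_comm]
        rw [e4, map_sum]
        congr 1
        exact Finset.sum_congr rfl fun j _ => by
          rw [map_smul, smul_eq_mul, ← mul_assoc]

/-- Step I (s-version): `ε_s(h)ε_s(g) = ∑ ε(g·1₍₃₎)ε(h·1₍₂₎)•1₍₁₎`. -/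
lemma epsS_mul_eq_ms (hpre : ComulMul R H) (hrm : RM R H) (h g : H)
    (r : Coalgebra.Repr R (1 : H) ι) (t : ∀ i : r.ι, Coalgebra.Repr R (r.left i) (κ i)) :
    epsS R H h * epsS R H g =
      ∑ j ∈ r.index, ε (g * r.right j) •
        ∑ m ∈ (t j).index, ε (h * (t j).right m) • (t j).left m := by
  classical
  let s : ∀ i : r.ι, Coalgebra.Repr R (r.right i) (H × H) := fun i => ℛ R _
  calc epsS R H h * epsS R H g
      = ∑ j ∈ r.index, ∑ i ∈ r.index,
          (ε (g * r.right j) * ε (h * r.right i)) • (r.left i * r.left j) := by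
        rw [epsS_repr r h, epsS_repr r g, Finset.sum_mul_sum, Finset.sum_comm]
        exact Finset.sum_congr rfl fun j _ => Finset.sum_congr rfl fun i _ => by
          rw [smul_mul_assoc, mul_smul_comm, smul_smul, mul_comm (ε (h * r.right i))]
    _ = ∑ j ∈ r.index, ∑ i ∈ r.index, (ε (g * r.right j) * ε (h * r.right i)) •
          (∑ k ∈ (t i).index, ∑ m ∈ (t j).index,
            ε ((t i).right k * (t j).right m) • ((t i).left k * (t j).left m)) := by
        exact Finset.sum_congr rfl fun j _ => Finset.sum_congr rfl fun i _ => by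
          rw [← mul_eq_sum_counit_right hpre (t i) (t j)]
    _ = ∑ j ∈ r.index, ε (g * r.right j) •
          ∑ m ∈ (t j).index, ∑ i ∈ r.index, ∑ k ∈ (t i).index,
            ε (h * r.right i) •
              (ε ((t i).right k * (t j).right m) • ((t i).left k * (t j).left m)) := by
        simp only [Finset.smul_sum, mul_smul]
        refine Finset.sum_congr rfl fun j _ => ?_
        exact (Finset.sum_congr rfl fun i _ => Finset.sum_comm).trans
          (Finset.sum_comm)
    _ = ∑ j ∈ r.index, ε (g * r.right j) •
          ∑ m ∈ (t j).index, ∑ i ∈ r.index, ∑ k ∈ (s i).index,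
            (ε ((s i).left k * (t j).right m) * ε (h * (s i).right k)) •
              (r.left i * (t j).left m) := by
        refine Finset.sum_congr rfl fun j _ => ?_
        congr 1
        refine Finset.sum_congr rfl fun m _ => ?_
        have hsw := switch3 (K3F R H (LinearMap.mulRight R ((t j).left m))
          (ε ∘ₗ LinearMap.mulRight R ((t j).right m))
          (ε ∘ₗ LinearMap.mulLeft R h)) r t s
        refine Eq.trans ?_ (hsw.trans ?_)
        · exact Finset.sum_congr rfl fun i _ => Finset.sum_congr rfl fun k _ => by
            simp [smul_smul, mul_comm]
        · exact Finset.sum_congr rfl fun i _ => Finset.sum_congr rfl fun k _ => by simp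
    _ = ∑ j ∈ r.index, ε (g * r.right j) •
          ∑ m ∈ (t j).index, ∑ i ∈ r.index,
            ε (h * r.right i * (t j).right m) • (r.left i * (t j).left m) := by
        refine Finset.sum_congr rfl fun j _ => ?_
        congr 1
        refine Finset.sum_congr rfl fun m _ => Finset.sum_congr rfl fun i _ => ?_
        rw [rm_repr hrm h ((t j).right m) (s i), Finset.sum_smul]
    _ = ∑ j ∈ r.index, ε (g * r.right j) •
          ∑ m ∈ (t j).index, ε (h * (t j).right m) • (t j).left m := by
        refine Finset.sum_congr rfl fun j _ => ?_
        congr 1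
        have e1 : ∀ m ∈ (t j).index, ∑ i ∈ r.index,
            ε (h * r.right i * (t j).right m) • (r.left i * (t j).left m)
            = ∑ i ∈ r.index, (K2F R H LinearMap.id (ε ∘ₗ LinearMap.mulLeft R h))
                ((r.left i * (t j).left m) ⊗ₜ[R] (r.right i * (t j).right m)) := by
          intro m _
          exact Finset.sum_congr rfl fun i _ => by simp [mul_assoc]
        rw [Finset.sum_congr rfl e1, Finset.sum_comm,
          sum_apply_comul_mul hpre (K2F R H LinearMap.id (ε ∘ₗ LinearMap.mulLeft R h)) r (t j),
          one_mul, ← sum_apply_comul (K2F R H LinearMap.id (ε ∘ₗ LinearMap.mulLeft R h)) (t j)]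
        exact Finset.sum_congr rfl fun m _ => by simp

/-- Step II (s-version): `∑ ε(g·1₍₃₎)ε(h·1₍₂₎)•1₍₁₎ = ε_s(h·ε_s(g))`. -/
lemma ms_eq_epsS_mul_epsS (hpre : ComulMul R H) (hrm : RM R H) (h g : H)
    (r : Coalgebra.Repr R (1 : H) ι) (t : ∀ i : r.ι, Coalgebra.Repr R (r.left i) (κ i)) :
    (∑ j ∈ r.index, ε (g * r.right j) •
        ∑ m ∈ (t j).index, ε (h * (t j).right m) • (t j).left m)
      = epsS R H (h * epsS R H g) := by
  classical
  let s : ∀ i : r.ι, Coalgebra.Repr R (r.right i) (H × H) := fun i => ℛ R _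
  calc (∑ j ∈ r.index, ε (g * r.right j) •
          ∑ m ∈ (t j).index, ε (h * (t j).right m) • (t j).left m)
      = ∑ j ∈ r.index, ∑ m ∈ (s j).index,
          (ε (h * (s j).left m) * ε (g * (s j).right m)) • r.left j := by
        simp only [Finset.smul_sum]
        refine Eq.trans (Eq.trans ?_
          (switch3 (K3F R H LinearMap.id (ε ∘ₗ LinearMap.mulLeft R h)
            (ε ∘ₗ LinearMap.mulLeft R g)) r t s)) ?_
        · exact Finset.sum_congr rfl fun j _ => Finset.sum_congr rfl fun m _ => by
            simp [smul_smul, mul_comm]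
        · exact Finset.sum_congr rfl fun j _ => Finset.sum_congr rfl fun m _ => by simp
    _ = ∑ j ∈ r.index,
          (∑ i ∈ r.index, ∑ m ∈ (s j).index,
            ε (h * (r.left i * (s j).left m)) * ε (g * (r.right i * (s j).right m))) • r.left j := by
        refine Finset.sum_congr rfl fun j _ => ?_
        rw [show (∑ m ∈ (s j).index,
            (ε (h * (s j).left m) * ε (g * (s j).right m)) • r.left j)
            = (∑ m ∈ (s j).index, ε (h * (s j).left m) * ε (g * (s j).right m)) • r.left j by
          rw [Finset.sum_smul]]
        congr 1
        have e1 : ∑ m ∈ (s j).index, ε (h * (s j).left m) * ε (g * (s j).right m)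
            = ∑ m ∈ (s j).index, (K2S R H (ε ∘ₗ LinearMap.mulLeft R h)
                (ε ∘ₗ LinearMap.mulLeft R g)) ((s j).left m ⊗ₜ[R] (s j).right m) := by
          exact Finset.sum_congr rfl fun m _ => by simp
        have e2 : ∑ i ∈ r.index, ∑ m ∈ (s j).index,
            ε (h * (r.left i * (s j).left m)) * ε (g * (r.right i * (s j).right m))
            = ∑ i ∈ r.index, ∑ m ∈ (s j).index, (K2S R H (ε ∘ₗ LinearMap.mulLeft R h)
                (ε ∘ₗ LinearMap.mulLeft R g))
                ((r.left i * (s j).left m) ⊗ₜ[R] (r.right i * (s j).right m)) := by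
          exact Finset.sum_congr rfl fun i _ => Finset.sum_congr rfl fun m _ => by simp
        rw [e1, e2, sum_apply_comul_mul hpre _ r (s j), one_mul,
          ← sum_apply_comul _ (s j)]
    _ = ∑ j ∈ r.index,
          (∑ i ∈ r.index, ε (g * r.right i) * (∑ k ∈ (t i).index, ∑ m ∈ (s j).index,
            ε ((t i).right k * (s j).right m) * ε (h * ((t i).left k * (s j).left m)))) • r.left j := by
        refine Finset.sum_congr rfl fun j _ => ?_
        congr 1
        have e3 : ∀ i ∈ r.index, ∀ m ∈ (s j).index,
            ε (h * (r.left i * (s j).left m)) * ε (g * (r.right i * (s j).right m))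
            = ∑ k ∈ (s i).index, ε (g * (s i).right k) *
                (ε ((s i).left k * (s j).right m) * ε (h * (r.left i * (s j).left m))) := by
          intro i _ m _
          rw [show ε (g * (r.right i * (s j).right m)) = ε (g * r.right i * (s j).right m) by
              rw [mul_assoc],
            rm_repr hrm g ((s j).right m) (s i), Finset.mul_sum]
          exact Finset.sum_congr rfl fun k _ => by ring
        calc ∑ i ∈ r.index, ∑ m ∈ (s j).index,
              ε (h * (r.left i * (s j).left m)) * ε (g * (r.right i * (s j).right m))
            = ∑ i ∈ r.index, ∑ m ∈ (s j).index, ∑ k ∈ (s i).index,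
                (K3S R H (ε ∘ₗ LinearMap.mulLeft R h ∘ₗ LinearMap.mulRight R ((s j).left m))
                  (ε ∘ₗ LinearMap.mulRight R ((s j).right m))
                  (ε ∘ₗ LinearMap.mulLeft R g))
                  (r.left i ⊗ₜ[R] ((s i).left k ⊗ₜ[R] (s i).right k)) := by
              refine Finset.sum_congr rfl fun i hi => Finset.sum_congr rfl fun m hm => ?_
              refine (e3 i hi m hm).trans ?_
              refine Finset.sum_congr rfl fun k _ => ?_
              simp only [K3S_tmul, LinearMap.comp_apply, LinearMap.mulLeft_apply,
                LinearMap.mulRight_apply]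
              ring
          _ = ∑ i ∈ r.index, ∑ m ∈ (s j).index, ∑ k ∈ (t i).index,
                (K3S R H (ε ∘ₗ LinearMap.mulLeft R h ∘ₗ LinearMap.mulRight R ((s j).left m))
                  (ε ∘ₗ LinearMap.mulRight R ((s j).right m))
                  (ε ∘ₗ LinearMap.mulLeft R g))
                  ((t i).left k ⊗ₜ[R] ((t i).right k ⊗ₜ[R] r.right i)) := by
              refine Eq.trans Finset.sum_comm ?_
              refine Eq.trans ?_ Finset.sum_comm
              exact Finset.sum_congr rfl fun m _ => (switch3 _ r t s).symm
          _ = ∑ i ∈ r.index, ε (g * r.right i) * (∑ k ∈ (t i).index, ∑ m ∈ (s j).index,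
                ε ((t i).right k * (s j).right m) * ε (h * ((t i).left k * (s j).left m))) := by
              refine Finset.sum_congr rfl fun i _ => ?_
              rw [Finset.mul_sum]
              refine (Finset.sum_comm).trans ?_
              refine Finset.sum_congr rfl fun k _ => ?_
              rw [Finset.mul_sum]
              refine Finset.sum_congr rfl fun m _ => ?_
              simp only [K3S_tmul, LinearMap.comp_apply, LinearMap.mulLeft_apply,
                LinearMap.mulRight_apply]
              ring
    _ = ∑ j ∈ r.index,
          (∑ i ∈ r.index, ε (g * r.right i) * ε (h * (r.left i * r.right j))) • r.left j := by
        refine Finset.sum_congr rfl fun j _ => ?_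
        congr 1
        exact Finset.sum_congr rfl fun i _ => by
          rw [merge_right hpre h (t i) (s j)]
    _ = epsS R H (h * epsS R H g) := by
        rw [epsS_repr r (h * epsS R H g)]
        refine (Finset.sum_congr rfl fun j _ => ?_).symm
        have e4 : h * epsS R H g * r.right j
            = ∑ i ∈ r.index, ε (g * r.right i) • (h * r.left i * r.right j) := by
          rw [epsS_repr r g, Finset.mul_sum, Finset.sum_mul]
          exact Finset.sum_congr rfl fun i _ => by
            rw [mul_smul_comm, smul_mul_assoc]
        rw [e4, map_sum]
        congr 1
        exact Finset.sum_congr rfl fun i _ => by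
          rw [map_smul, smul_eq_mul, mul_assoc]

end Claims
/-- If a prebialgebra `H` satisfies (rm), then
`ε_t(h)ε_t(g) = ε_t(ε_t(h)g)` and `ε_s(h)ε_s(g) = ε_s(hε_s(g))`; consequently
`H_t = Im(ε_t)` and `H_s = Im(ε_s)` are subalgebras of `H`. -/
theorem rm_epsT_epsS_mul
    (R H : Type) [CommRing R] [Ring H] [Algebra R H] [Coalgebra R H]
    (hpre : ComulMul R H) (hrm : RM R H) :
    (∀ h g : H, epsT R H h * epsT R H g = epsT R H (epsT R H h * g)) ∧
    (∀ h g : H, epsS R H h * epsS R H g = epsS R H (h * epsS R H g)) ∧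
    (1 : H) ∈ Set.range (epsT R H) ∧
    (∀ x ∈ Set.range (epsT R H), ∀ y ∈ Set.range (epsT R H),
      x * y ∈ Set.range (epsT R H)) ∧
    (1 : H) ∈ Set.range (epsS R H) ∧
    (∀ x ∈ Set.range (epsS R H), ∀ y ∈ Set.range (epsS R H),
      x * y ∈ Set.range (epsS R H)) := by
  classical
  have hT : ∀ h g : H, epsT R H h * epsT R H g = epsT R H (epsT R H h * g) := by
    intro h g
    let r : Coalgebra.Repr R (1 : H) (H × H) := ℛ R 1
    let s : ∀ i : r.ι, Coalgebra.Repr R (r.right i) (H × H) := fun i => ℛ R _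
    exact (epsT_mul_eq_m hpre hrm h g r s).trans (m_eq_epsT_epsT_mul hpre hrm h g r s)
  have hS : ∀ h g : H, epsS R H h * epsS R H g = epsS R H (h * epsS R H g) := by
    intro h g
    let r : Coalgebra.Repr R (1 : H) (H × H) := ℛ R 1
    let t : ∀ i : r.ι, Coalgebra.Repr R (r.left i) (H × H) := fun i => ℛ R _
    exact (epsS_mul_eq_ms hpre hrm h g r t).trans (ms_eq_epsS_mul_epsS hpre hrm h g r t)
  have h1T : epsT R H 1 = 1 := by
    let r : Coalgebra.Repr R (1 : H) (H × H) := ℛ R 1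
    rw [epsT_repr r 1]
    simpa only [mul_one] using counit_smul_left r
  have h1S : epsS R H 1 = 1 := by
    let r : Coalgebra.Repr R (1 : H) (H × H) := ℛ R 1
    rw [epsS_repr r 1]
    simpa only [one_mul] using counit_smul_right r
  refine ⟨hT, hS, ⟨1, h1T⟩, ?_, ⟨1, h1S⟩, ?_⟩
  · rintro x ⟨h, rfl⟩ y ⟨g, rfl⟩
    exact ⟨epsT R H h * g, (hT h g).symm⟩
  · rintro x ⟨h, rfl⟩ y ⟨g, rfl⟩
    exact ⟨h * epsS R H g, (hS h g).symm⟩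
end

section
/- Let H be a prebialgebra satisfying the right comonoidality axiom (rc): Δ²(1) = 1₍₁₎ ⊗ 1₍₁'₎1₍₂₎ ⊗ 1₍₂'₎. Then H_t = Im(ε_t) is closed under multiplication, i.e. ε_t(h)ε_t(k) ∈ H_t for all h,k ∈ H; hence H_t is a subalgebra of H. -/
open TensorProduct Coalgebra

section Aux

variable (R H : Type) [CommRing R] [Ring H] [Algebra R H] [Coalgebra R H]

/-- Auxiliary map: `Lmap h (a ⊗ b) = ε(a h) • b`. -/
noncomputable def Lmap (h : H) : H ⊗[R] H →ₗ[R] H :=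
  (TensorProduct.lid R H).toLinearMap ∘ₗ
    TensorProduct.map (Coalgebra.counit ∘ₗ LinearMap.mulRight R h) LinearMap.id

@[simp] lemma Lmap_tmul (h a b : H) :
    Lmap R H h (a ⊗ₜ[R] b) = Coalgebra.counit (R := R) (a * h) • b := by
  simp [Lmap]

/-- Auxiliary map: `Psi h (a ⊗ w) = ε(a h) • w`. -/
noncomputable def Psi (h : H) : H ⊗[R] (H ⊗[R] H) →ₗ[R] H ⊗[R] H :=
  (TensorProduct.lid R (H ⊗[R] H)).toLinearMap ∘ₗ
    TensorProduct.map (Coalgebra.counit ∘ₗ LinearMap.mulRight R h) LinearMap.id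

@[simp] lemma Psi_tmul (h a : H) (w : H ⊗[R] H) :
    Psi R H h (a ⊗ₜ[R] w) = Coalgebra.counit (R := R) (a * h) • w := by
  simp [Psi]

lemma epsT_eq (h : H) :
    epsT R H h = Lmap R H h (Coalgebra.comul (R := R) (1 : H)) := by
  have key : ((TensorProduct.lid R H).toLinearMap ∘ₗ
      TensorProduct.map (Coalgebra.counit (R := R)) (LinearMap.id (R := R) (M := H)) ∘ₗ
      LinearMap.mulRight R (h ⊗ₜ[R] (1 : H))) = Lmap R H h := by
    apply TensorProduct.ext'
    intro a b
    simp [Algebra.TensorProduct.tmul_mul_tmul]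
  have h1 : epsT R H h = ((TensorProduct.lid R H).toLinearMap ∘ₗ
      TensorProduct.map (Coalgebra.counit (R := R)) (LinearMap.id (R := R) (M := H)) ∘ₗ
      LinearMap.mulRight R (h ⊗ₜ[R] (1 : H))) (Coalgebra.comul (R := R) (1 : H)) := by
    simp [epsT, LinearMap.mulLeft_apply, LinearMap.mulRight_apply]
  rw [h1, key]

lemma comul_comp_Lmap (h : H) :
    (Coalgebra.comul (R := R) (A := H)) ∘ₗ Lmap R H h =
      Psi R H h ∘ₗ TensorProduct.map LinearMap.id (Coalgebra.comul (R := R)) := by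
  apply TensorProduct.ext'
  intro a b
  simp

lemma psi_mul_left (h : H) :
    Psi R H h ∘ₗ
      LinearMap.mulLeft R ((1 : H) ⊗ₜ[R] (Coalgebra.comul (R := R) (1 : H))) ∘ₗ
      TensorProduct.map LinearMap.id
        (Algebra.TensorProduct.includeLeft (R := R) (A := H) (B := H)).toLinearMap =
    LinearMap.mulLeft R (Coalgebra.comul (R := R) (1 : H)) ∘ₗ
      (Algebra.TensorProduct.includeLeft (R := R) (A := H) (B := H)).toLinearMap ∘ₗ
      Lmap R H h := by
  apply TensorProduct.ext'
  intro a b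
  simp only [LinearMap.comp_apply, TensorProduct.map_tmul, LinearMap.id_coe, id_eq,
    Algebra.TensorProduct.includeLeft_apply, LinearMap.mulLeft_apply, Lmap_tmul,
    Algebra.TensorProduct.tmul_mul_tmul, one_mul]
  simp only [Psi_tmul, map_smul, mul_smul_comm, one_mul]

/-- The key consequence of (rc): `Δ(ε_t(h)) = Δ(1)·(ε_t(h) ⊗ 1)`. -/
lemma comul_epsT (hrc : RC R H) (h : H) :
    Coalgebra.comul (R := R) (epsT R H h) =
      Coalgebra.comul (R := R) (1 : H) * (epsT R H h ⊗ₜ[R] (1 : H)) := by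
  have e1 : Coalgebra.comul (R := R) (epsT R H h) = Psi R H h (comulSq1 R H) := by
    rw [epsT_eq]
    have := LinearMap.congr_fun (comul_comp_Lmap R H h) (Coalgebra.comul (R := R) (1 : H))
    simpa [comulSq1] using this
  have e2 : Psi R H h (d1Right R H * d1Left R H) =
      Coalgebra.comul (R := R) (1 : H) * (epsT R H h ⊗ₜ[R] (1 : H)) := by
    have := LinearMap.congr_fun (psi_mul_left R H h) (Coalgebra.comul (R := R) (1 : H))
    simp only [LinearMap.comp_apply, LinearMap.mulLeft_apply] at this
    rw [d1Right, d1Left, this, epsT_eq]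
    rfl
  rw [e1, hrc, e2]

/-- If `Δ(x) = Δ(1)·(x ⊗ 1)` then `ε_t(x) = x`. -/
lemma epsT_fixed (x : H)
    (hx : Coalgebra.comul (R := R) x =
      Coalgebra.comul (R := R) (1 : H) * (x ⊗ₜ[R] (1 : H))) :
    epsT R H x = x := by
  have h1 : epsT R H x = (TensorProduct.lid R H)
      (TensorProduct.map (Coalgebra.counit (R := R)) LinearMap.id
        (Coalgebra.comul (R := R) (1 : H) * (x ⊗ₜ[R] (1 : H)))) := by
    simp [epsT, LinearMap.mulLeft_apply]
  rw [h1, ← hx]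
  have h2 : TensorProduct.map (Coalgebra.counit (R := R)) (LinearMap.id (R := R) (M := H))
      (Coalgebra.comul (R := R) x) = (1 : R) ⊗ₜ[R] x := by
    have := Coalgebra.rTensor_counit_comul (R := R) x
    simpa [LinearMap.rTensor] using this
  rw [h2]
  simp

end Aux

/-- If a prebialgebra `H` satisfies (rc), then `H_t = Im(ε_t)` is closed
under multiplication, hence a subalgebra of `H`. -/
theorem rc_Ht_subalgebra
    (R H : Type) [CommRing R] [Ring H] [Algebra R H] [Coalgebra R H]
    (hpre : ComulMul R H) (hrc : RC R H) :
    (∀ h k : H, epsT R H h * epsT R H k ∈ Set.range (epsT R H)) ∧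
    (1 : H) ∈ Set.range (epsT R H) := by
  set E := Coalgebra.comul (R := R) (1 : H) with hE
  have hEE : E * E = E := by
    have := hpre 1 1
    rw [mul_one] at this
    exact this.symm
  have hmulE : ∀ x : H, Coalgebra.comul (R := R) x * E = Coalgebra.comul (R := R) x := by
    intro x
    have := hpre x 1
    rw [mul_one] at this
    exact this.symm
  -- the set of "target-like" elements
  have closed : ∀ x z : H,
      Coalgebra.comul (R := R) x = E * (x ⊗ₜ[R] (1 : H)) →
      Coalgebra.comul (R := R) z = E * (z ⊗ₜ[R] (1 : H)) →
      Coalgebra.comul (R := R) (x * z) = E * ((x * z) ⊗ₜ[R] (1 : H)) := by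
    intro x z hx hz
    calc Coalgebra.comul (R := R) (x * z)
        = Coalgebra.comul (R := R) x * Coalgebra.comul (R := R) z := hpre x z
      _ = Coalgebra.comul (R := R) x * (E * (z ⊗ₜ[R] (1 : H))) := by rw [← hz]
      _ = (Coalgebra.comul (R := R) x * E) * (z ⊗ₜ[R] (1 : H)) := by rw [mul_assoc]
      _ = Coalgebra.comul (R := R) x * (z ⊗ₜ[R] (1 : H)) := by rw [hmulE]
      _ = (E * (x ⊗ₜ[R] (1 : H))) * (z ⊗ₜ[R] (1 : H)) := by rw [← hx]
      _ = E * ((x ⊗ₜ[R] (1 : H)) * (z ⊗ₜ[R] (1 : H))) := by rw [mul_assoc]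
      _ = E * ((x * z) ⊗ₜ[R] (1 : H)) := by
          rw [Algebra.TensorProduct.tmul_mul_tmul, one_mul]
  constructor
  · intro h k
    have hx := comul_epsT R H hrc h
    have hz := comul_epsT R H hrc k
    have hxz := closed _ _ hx hz
    exact ⟨epsT R H h * epsT R H k, epsT_fixed R H _ hxz⟩
  · have h1 : Coalgebra.comul (R := R) (1 : H) = E * ((1 : H) ⊗ₜ[R] (1 : H)) := by
      rw [← Algebra.TensorProduct.one_def, mul_one, hE]
    exact ⟨1, epsT_fixed R H 1 h1⟩
end

section
/- Let H be a prebialgebra satisfying the right comonoidality axiom (rc). Then Δ(1) ∈ H_s ⊗ H_t, i.e. (ε_s ⊗ ε_t)(Δ(1)) = Δ(1), where ε_t(h) = ε(1₍₁₎h)1₍₂₎, ε_s(h) = ε(h1₍₂₎)1₍₁₎, H_t = Im(ε_t), H_s = Im(ε_s). -/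
open TensorProduct Coalgebra

/-- If a prebialgebra `H` satisfies (rc), then
`(ε_s ⊗ ε_t)(Δ(1)) = Δ(1)`, i.e. `Δ(1) ∈ H_s ⊗ H_t`. -/
theorem rc_comul_one_mem
    (R H : Type) [CommRing R] [Ring H] [Algebra R H] [Coalgebra R H]
    (hpre : ComulMul R H) (hrc : RC R H) :
    (TensorProduct.map (epsS R H) (epsT R H)) (Coalgebra.comul (R := R) (1 : H)) =
      Coalgebra.comul (R := R) (1 : H) := by
  classical
  obtain ⟨s, hs⟩ := TensorProduct.exists_finset (Coalgebra.comul (R := R) (1 : H))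
  set F : H ⊗[R] (H ⊗[R] H) →ₗ[R] H ⊗[R] H :=
    TensorProduct.map LinearMap.id
      ((TensorProduct.lid R H).toLinearMap ∘ₗ
        TensorProduct.map Coalgebra.counit LinearMap.id) with hFdef
  -- pointwise formulas
  have hepsT : ∀ h : H, epsT R H h =
      ∑ p ∈ s, Coalgebra.counit (R := R) (p.1 * h) • p.2 := by
    intro h
    simp only [epsT, LinearMap.comp_apply, AlgHom.toLinearMap_apply,
      Algebra.TensorProduct.includeLeft_apply, LinearMap.mulLeft_apply, hs,
      Finset.sum_mul, Algebra.TensorProduct.tmul_mul_tmul, mul_one, map_sum,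
      TensorProduct.map_tmul, LinearMap.id_apply]
    simp
  have hepsS : ∀ h : H, epsS R H h =
      ∑ p ∈ s, Coalgebra.counit (R := R) (h * p.2) • p.1 := by
    intro h
    simp only [epsS, LinearMap.comp_apply, AlgHom.toLinearMap_apply,
      Algebra.TensorProduct.includeRight_apply, LinearMap.mulRight_apply, hs,
      Finset.mul_sum, Algebra.TensorProduct.tmul_mul_tmul, one_mul, map_sum,
      TensorProduct.map_tmul, LinearMap.id_apply]
    simp
  -- F applied to comulSq1 gives comul 1
  have h1 : F (comulSq1 R H) = Coalgebra.comul (R := R) (1 : H) := by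
    conv_lhs => rw [comulSq1, hs]
    rw [map_sum, map_sum]
    conv_rhs => rw [hs]
    refine Finset.sum_congr rfl fun p _ => ?_
    have : (TensorProduct.map (Coalgebra.counit (R := R)) (LinearMap.id (M := H)))
        (Coalgebra.comul (R := R) p.2) = (1:R) ⊗ₜ[R] p.2 := by
      simpa [LinearMap.rTensor] using Coalgebra.rTensor_counit_comul (R := R) p.2
    simp [hFdef, TensorProduct.map_tmul, this]
  -- F applied to the RHS of (rc)
  have h2 : F (d1Right R H * d1Left R H) =
      ∑ p ∈ s, ∑ q ∈ s,
        Coalgebra.counit (R := R) (p.1 * q.2) • (q.1 ⊗ₜ[R] p.2) := by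
    rw [d1Right, d1Left]
    conv_lhs => rw [hs]
    rw [map_sum, TensorProduct.tmul_sum, Finset.sum_mul, map_sum]
    refine Finset.sum_congr rfl fun p _ => ?_
    rw [Finset.mul_sum, map_sum]
    refine Finset.sum_congr rfl fun q _ => ?_
    simp [hFdef, Algebra.TensorProduct.tmul_mul_tmul, TensorProduct.map_tmul,
      TensorProduct.lid_tmul, TensorProduct.tmul_smul]
  have key : (∑ p ∈ s, ∑ q ∈ s,
      Coalgebra.counit (R := R) (p.1 * q.2) • (q.1 ⊗ₜ[R] p.2)) =
      Coalgebra.comul (R := R) (1 : H) := by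
    rw [← h2, ← hrc, h1]
  -- map id epsT fixes comul 1
  have hT : TensorProduct.map (LinearMap.id (M := H)) (epsT R H)
      (Coalgebra.comul (R := R) (1 : H)) = Coalgebra.comul (R := R) (1 : H) := by
    conv_lhs => rw [hs]
    rw [map_sum]
    rw [← key, Finset.sum_comm]
    refine Finset.sum_congr rfl fun q _ => ?_
    simp [hepsT, TensorProduct.tmul_sum, TensorProduct.tmul_smul]
  have hS : TensorProduct.map (epsS R H) (LinearMap.id (M := H))
      (Coalgebra.comul (R := R) (1 : H)) = Coalgebra.comul (R := R) (1 : H) := by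
    conv_lhs => rw [hs]
    rw [map_sum, ← key]
    refine Finset.sum_congr rfl fun q _ => ?_
    simp [hepsS, TensorProduct.sum_tmul, TensorProduct.smul_tmul, TensorProduct.tmul_smul]
  have hsplit : TensorProduct.map (epsS R H) (epsT R H) =
      TensorProduct.map (epsS R H) LinearMap.id ∘ₗ
        TensorProduct.map LinearMap.id (epsT R H) := by
    rw [← TensorProduct.map_comp, LinearMap.comp_id, LinearMap.id_comp]
  rw [hsplit, LinearMap.comp_apply, hT, hS]
end

section
/- Let H be a prebialgebra satisfying (rm) or (rc). Then H_t = Im(ε_t) is a finitely generated projective k-module, with finite dual basis given by 1₍₂₎ ⊗ g'(1₍₁₎) ∈ H_t ⊗ (H_t)*, where g'(h) = ε(h−); that is, z = ε(1₍₁₎z)1₍₂₎ for every z ∈ H_t and 1₍₂₎ ⊗ g'(1₍₁₎) lies in H_t ⊗ H_s* under the identification H_s* ≅ (H_t)*. -/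
open TensorProduct Coalgebra

section Aux

variable {R H : Type} [CommRing R] [Ring H] [Algebra R H] [Coalgebra R H]

lemma epsT_apply_sum (S : Finset (H × H))
    (hS : Coalgebra.comul (R := R) (1 : H) = ∑ p ∈ S, p.1 ⊗ₜ[R] p.2) (h : H) :
    epsT R H h = ∑ p ∈ S, Coalgebra.counit (R := R) (p.1 * h) • p.2 := by
  simp only [epsT, LinearMap.comp_apply, AlgHom.toLinearMap_apply,
    Algebra.TensorProduct.includeLeft_apply, LinearMap.mulLeft_apply, hS,
    Finset.sum_mul, Algebra.TensorProduct.tmul_mul_tmul, mul_one, map_sum,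
    TensorProduct.map_tmul, LinearMap.id_coe, id_eq, LinearEquiv.coe_coe,
    TensorProduct.lid_tmul]

/-- The (rm) axiom specialised at middle element `1`. -/
lemma rm_sum_s10 (hrm : RM R H) (S : Finset (H × H))
    (hS : Coalgebra.comul (R := R) (1 : H) = ∑ p ∈ S, p.1 ⊗ₜ[R] p.2) (k h : H) :
    ∑ p ∈ S, Coalgebra.counit (R := R) (k * p.2) * Coalgebra.counit (R := R) (p.1 * h)
      = Coalgebra.counit (R := R) (k * h) := by
  have := hrm k 1 h
  rw [mul_one, hS, map_sum, map_sum] at this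
  rw [this]
  refine Finset.sum_congr rfl fun p _ => ?_
  simp [mul_comm]

lemma counit_mul_epsT (hrm : RM R H) (S : Finset (H × H))
    (hS : Coalgebra.comul (R := R) (1 : H) = ∑ p ∈ S, p.1 ⊗ₜ[R] p.2) (k h : H) :
    Coalgebra.counit (R := R) (k * epsT R H h) = Coalgebra.counit (R := R) (k * h) := by
  rw [epsT_apply_sum S hS, Finset.mul_sum, map_sum, ← rm_sum_s10 hrm S hS k h]
  refine Finset.sum_congr rfl fun p _ => ?_
  rw [mul_smul_comm, map_smul, smul_eq_mul, mul_comm]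

lemma epsT_idem_rm (hrm : RM R H) (h : H) : epsT R H (epsT R H h) = epsT R H h := by
  obtain ⟨S, hS⟩ := TensorProduct.exists_finset (Coalgebra.comul (R := R) (1 : H))
  calc epsT R H (epsT R H h)
      = ∑ p ∈ S, Coalgebra.counit (R := R) (p.1 * epsT R H h) • p.2 :=
        epsT_apply_sum S hS _
    _ = ∑ p ∈ S, Coalgebra.counit (R := R) (p.1 * h) • p.2 :=
        Finset.sum_congr rfl fun p _ => by rw [counit_mul_epsT hrm S hS]
    _ = epsT R H h := (epsT_apply_sum S hS h).symm

/-- Under (rc), `(id ⊗ ε_t)(Δ(1)) = Δ(1)`. -/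
lemma lTensor_epsT_comul_one (hrc : RC R H) (S : Finset (H × H))
    (hS : Coalgebra.comul (R := R) (1 : H) = ∑ p ∈ S, p.1 ⊗ₜ[R] p.2) :
    ∑ p ∈ S, p.1 ⊗ₜ[R] epsT R H p.2 = ∑ p ∈ S, p.1 ⊗ₜ[R] p.2 := by
  have key := congrArg (TensorProduct.map (LinearMap.id (R := R) (M := H))
    ((TensorProduct.lid R H).toLinearMap ∘ₗ
      TensorProduct.map Coalgebra.counit LinearMap.id)) hrc
  have hL : (TensorProduct.map (LinearMap.id (R := R) (M := H))
      ((TensorProduct.lid R H).toLinearMap ∘ₗ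
        TensorProduct.map Coalgebra.counit LinearMap.id)) (comulSq1 R H)
      = ∑ p ∈ S, p.1 ⊗ₜ[R] p.2 := by
    rw [comulSq1, hS, map_sum, map_sum]
    refine Finset.sum_congr rfl fun p _ => ?_
    have h2 : (TensorProduct.map (Coalgebra.counit (R := R)) (LinearMap.id (M := H)))
        (Coalgebra.comul (R := R) p.2) = (1 : R) ⊗ₜ[R] p.2 :=
      Coalgebra.rTensor_counit_comul p.2
    simp [h2]
  have hR : (TensorProduct.map (LinearMap.id (R := R) (M := H))
      ((TensorProduct.lid R H).toLinearMap ∘ₗ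
        TensorProduct.map Coalgebra.counit LinearMap.id)) (d1Right R H * d1Left R H)
      = ∑ p ∈ S, p.1 ⊗ₜ[R] epsT R H p.2 := by
    rw [d1Right, d1Left, hS, map_sum, Finset.mul_sum, map_sum]
    refine Finset.sum_congr rfl fun p _ => ?_
    rw [epsT_apply_sum S hS p.2]
    simp [Algebra.TensorProduct.tmul_mul_tmul, Finset.sum_mul,
      TensorProduct.tmul_sum, mul_one]
  rw [hL, hR] at key
  exact key.symm

lemma epsT_idem_rc (hrc : RC R H) (h : H) : epsT R H (epsT R H h) = epsT R H h := by
  obtain ⟨S, hS⟩ := TensorProduct.exists_finset (Coalgebra.comul (R := R) (1 : H))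
  have T1 := lTensor_epsT_comul_one hrc S hS
  have key := congrArg ((TensorProduct.lid R H).toLinearMap ∘ₗ
      TensorProduct.map Coalgebra.counit LinearMap.id ∘ₗ
      LinearMap.mulRight R (h ⊗ₜ[R] (1 : H))) T1
  simp only [map_sum, LinearMap.comp_apply, LinearMap.mulRight_apply,
    Algebra.TensorProduct.tmul_mul_tmul, mul_one, TensorProduct.map_tmul,
    LinearMap.id_coe, id_eq, LinearEquiv.coe_coe, TensorProduct.lid_tmul] at key
  rw [epsT_apply_sum S hS h, map_sum]
  simp only [map_smul]
  rw [key, ← epsT_apply_sum S hS h]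

lemma epsT_idem (hax : RM R H ∨ RC R H) (h : H) :
    epsT R H (epsT R H h) = epsT R H h := by
  rcases hax with hrm | hrc
  · exact epsT_idem_rm hrm h
  · exact epsT_idem_rc hrc h

/-- the canonical element `t = ∑ p.2 ⊗ g'(p.1)` -/
lemma t_eq (S : Finset (H × H))
    (hS : Coalgebra.comul (R := R) (1 : H) = ∑ p ∈ S, p.1 ⊗ₜ[R] p.2) :
    (TensorProduct.map LinearMap.id (gmap' R H))
        ((TensorProduct.comm R H H) (Coalgebra.comul (R := R) (1 : H)))
      = ∑ p ∈ S, p.2 ⊗ₜ[R] gmap' R H p.1 := by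
  rw [hS, map_sum, map_sum]
  simp

lemma gmap'_apply (a h : H) :
    gmap' R H a h = Coalgebra.counit (R := R) (a * h) := rfl

/-- generic swap identity: `(id ⊗ (- ∘ ε_t)) t = (ε_t ⊗ id) t`. -/
lemma swap_identity (S : Finset (H × H))
    (hS : Coalgebra.comul (R := R) (1 : H) = ∑ p ∈ S, p.1 ⊗ₜ[R] p.2) :
    (TensorProduct.map LinearMap.id (LinearMap.lcomp R R (epsT R H)))
        (∑ p ∈ S, p.2 ⊗ₜ[R] gmap' R H p.1)
      = (TensorProduct.map (epsT R H) LinearMap.id)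
        (∑ p ∈ S, p.2 ⊗ₜ[R] gmap' R H p.1) := by
  have hfun : ∀ a : H, (gmap' R H a).comp (epsT R H)
      = ∑ q ∈ S, Coalgebra.counit (R := R) (a * q.2) • gmap' R H q.1 := by
    intro a
    ext h
    simp only [LinearMap.comp_apply, gmap'_apply, LinearMap.coe_sum,
      Finset.sum_apply, LinearMap.smul_apply, smul_eq_mul]
    rw [epsT_apply_sum S hS h, Finset.mul_sum, map_sum]
    refine Finset.sum_congr rfl fun q _ => ?_
    rw [mul_smul_comm, map_smul, smul_eq_mul, mul_comm]
  rw [map_sum, map_sum]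
  calc ∑ p ∈ S, (TensorProduct.map LinearMap.id (LinearMap.lcomp R R (epsT R H)))
        (p.2 ⊗ₜ[R] gmap' R H p.1)
      = ∑ p ∈ S, ∑ q ∈ S, Coalgebra.counit (R := R) (p.1 * q.2) •
          (p.2 ⊗ₜ[R] gmap' R H q.1) := by
        refine Finset.sum_congr rfl fun p _ => ?_
        simp only [TensorProduct.map_tmul, LinearMap.id_coe, id_eq,
          LinearMap.lcomp_apply']
        rw [hfun p.1, TensorProduct.tmul_sum]
        refine Finset.sum_congr rfl fun q _ => ?_
        rw [TensorProduct.tmul_smul]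
    _ = ∑ q ∈ S, ∑ p ∈ S, Coalgebra.counit (R := R) (p.1 * q.2) •
          (p.2 ⊗ₜ[R] gmap' R H q.1) := Finset.sum_comm
    _ = _ := by
        refine (Finset.sum_congr rfl fun q _ => ?_).symm
        simp only [TensorProduct.map_tmul, LinearMap.id_coe, id_eq]
        rw [epsT_apply_sum S hS q.2, TensorProduct.sum_tmul]
        refine Finset.sum_congr rfl fun p _ => ?_
        rw [TensorProduct.smul_tmul']

/-- `(ε_t ⊗ id) t = t` under (rm) or (rc). -/
lemma E_identity (hax : RM R H ∨ RC R H) (S : Finset (H × H))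
    (hS : Coalgebra.comul (R := R) (1 : H) = ∑ p ∈ S, p.1 ⊗ₜ[R] p.2) :
    (TensorProduct.map (epsT R H) LinearMap.id)
        (∑ p ∈ S, p.2 ⊗ₜ[R] gmap' R H p.1)
      = ∑ p ∈ S, p.2 ⊗ₜ[R] gmap' R H p.1 := by
  rcases hax with hrm | hrc
  · rw [← swap_identity S hS, map_sum]
    refine Finset.sum_congr rfl fun p _ => ?_
    simp only [TensorProduct.map_tmul, LinearMap.id_coe, id_eq,
      LinearMap.lcomp_apply']
    congr 1
    ext h
    simp only [LinearMap.comp_apply, gmap'_apply]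
    exact counit_mul_epsT hrm S hS p.1 h
  · have T1 := lTensor_epsT_comul_one hrc S hS
    have key := congrArg ((TensorProduct.map LinearMap.id (gmap' R H)) ∘ₗ
      (TensorProduct.comm R H H).toLinearMap) T1
    simp only [map_sum, LinearMap.comp_apply, LinearEquiv.coe_coe,
      TensorProduct.comm_tmul, TensorProduct.map_tmul, LinearMap.id_coe, id_eq] at key
    rw [map_sum]
    calc ∑ p ∈ S, (TensorProduct.map (epsT R H) LinearMap.id)
          (p.2 ⊗ₜ[R] gmap' R H p.1)
        = ∑ p ∈ S, epsT R H p.2 ⊗ₜ[R] gmap' R H p.1 := by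
          refine Finset.sum_congr rfl fun p _ => ?_
          simp
      _ = ∑ p ∈ S, p.2 ⊗ₜ[R] gmap' R H p.1 := key

end Aux

/-- If a prebialgebra `H` satisfies (rm) or (rc), then `H_t = Im(ε_t)` is
finitely generated projective over `k`, with finite dual basis `1₍₂₎ ⊗ g'(1₍₁₎)`:
every `z ∈ H_t` satisfies `z = ε(1₍₁₎z)1₍₂₎ = ε_t(z)`, and `1₍₂₎ ⊗ g'(1₍₁₎)` lies in
`H_t ⊗ H_s*` in the sense that it is fixed by `ε_t ⊗ ε_s*`. -/
theorem Ht_finite_projective_dual_basis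
    (R H : Type) [CommRing R] [Ring H] [Algebra R H] [Coalgebra R H]
    (hpre : ComulMul R H) (hax : RM R H ∨ RC R H) :
    Module.Finite R ↥(LinearMap.range (epsT R H)) ∧
    Module.Projective R ↥(LinearMap.range (epsT R H)) ∧
    (∀ z ∈ LinearMap.range (epsT R H), epsT R H z = z) ∧
    (TensorProduct.map (epsT R H) (LinearMap.lcomp R R (epsT R H)))
        ((TensorProduct.map LinearMap.id (gmap' R H))
          ((TensorProduct.comm R H H) (Coalgebra.comul (R := R) (1 : H)))) =
      (TensorProduct.map LinearMap.id (gmap' R H))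
        ((TensorProduct.comm R H H) (Coalgebra.comul (R := R) (1 : H))) := by
  obtain ⟨S, hS⟩ := TensorProduct.exists_finset (Coalgebra.comul (R := R) (1 : H))
  have idem : ∀ h : H, epsT R H (epsT R H h) = epsT R H h := epsT_idem hax
  have hmem : ∀ z ∈ LinearMap.range (epsT R H), epsT R H z = z := by
    rintro z ⟨w, rfl⟩; exact idem w
  -- the splitting maps
  set Ht := LinearMap.range (epsT R H) with hHt
  let i : Ht →ₗ[R] (↥S → R) :=
    LinearMap.pi fun p => gmap' R H p.1.1 ∘ₗ Ht.subtype
  let e : ↥S → Ht := fun p => ⟨epsT R H p.1.2, LinearMap.mem_range_self _ _⟩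
  let s : (↥S → R) →ₗ[R] Ht :=
    ∑ p : ↥S, LinearMap.toSpanSingleton R Ht (e p) ∘ₗ LinearMap.proj p
  have hsi : s.comp i = LinearMap.id := by
    apply LinearMap.ext
    intro z
    apply Subtype.ext
    simp only [LinearMap.comp_apply, LinearMap.id_apply, s, i,
      LinearMap.coe_sum, Finset.sum_apply, LinearMap.proj_apply,
      LinearMap.pi_apply, LinearMap.toSpanSingleton_apply,
      Submodule.coe_subtype]
    rw [AddSubmonoidClass.coe_finset_sum]
    simp only [SetLike.val_smul, e, gmap'_apply]
    rw [Finset.sum_coe_sort S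
      (fun p => Coalgebra.counit (R := R) (p.1 * (z : H)) • epsT R H p.2)]
    have h2 : ∑ p ∈ S, Coalgebra.counit (R := R) (p.1 * (z : H)) • epsT R H p.2
        = epsT R H (epsT R H (z : H)) := by
      rw [epsT_apply_sum S hS (z : H), map_sum]
      simp only [map_smul]
    rw [h2, idem, hmem _ z.2]
  have hsurj : Function.Surjective s := fun z => ⟨i z, by
    have := LinearMap.congr_fun hsi z; simpa using this⟩
  refine ⟨Module.Finite.of_surjective s hsurj,
    Module.Projective.of_split i s hsi, hmem, ?_⟩
  -- the dual basis identity
  rw [t_eq S hS]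
  have hmap : TensorProduct.map (epsT R H) (LinearMap.lcomp R R (epsT R H))
      = (TensorProduct.map (epsT R H) LinearMap.id).comp
        (TensorProduct.map LinearMap.id (LinearMap.lcomp R R (epsT R H))) := by
    rw [← TensorProduct.map_comp]
    simp
  rw [hmap, LinearMap.comp_apply, swap_identity S hS, E_identity hax S hS,
    E_identity hax S hS]
end

section
/- Let H be a prebialgebra satisfying the left monoidality axiom (lm): ε(hkl)=ε(hk₍₁₎)ε(k₍₂₎l). Then g ∘ ε̄_s = g and consequently ε_t ∘ ε̄_s = ε_t, where g(h) = ε(−h), ε̄_s(h) = ε(1₍₂₎h)1₍₁₎, and ε_t(h) = ε(1₍₁₎h)1₍₂₎. -/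
open TensorProduct Coalgebra

/-- If a prebialgebra `H` satisfies (lm), then `g ∘ ε̄_s = g` and
consequently `ε_t ∘ ε̄_s = ε_t`. -/
theorem lm_g_comp_epsSbar
    (R H : Type) [CommRing R] [Ring H] [Algebra R H] [Coalgebra R H]
    (hpre : ComulMul R H) (hlm : LM R H) :
    gmap R H ∘ₗ epsSbar R H = gmap R H ∧
    epsT R H ∘ₗ epsSbar R H = epsT R H := by
  have key : ∀ h k : H, Coalgebra.counit (R := R) (k * epsSbar R H h)
      = Coalgebra.counit (R := R) (k * h) := by
    intro h k
    have hl := hlm k 1 h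
    rw [mul_one] at hl
    rw [hl]
    simp only [epsSbar, LinearMap.coe_comp, Function.comp_apply,
      AlgHom.toLinearMap_apply, Algebra.TensorProduct.includeRight_apply,
      LinearMap.mulLeft_apply, LinearEquiv.coe_coe]
    generalize (Coalgebra.comul (R := R) (1 : H)) = x
    induction x using TensorProduct.induction_on with
    | zero => simp
    | tmul a b =>
        simp [Algebra.TensorProduct.tmul_mul_tmul, mul_comm, mul_smul_comm,
          Algebra.mul_smul_comm, smul_eq_mul]
    | add y z hy hz =>
        simp only [add_mul, map_add, mul_add] at *
        rw [hy, hz]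
  have gen : ∀ (x : H ⊗[R] H) (a b : H),
      (∀ k : H, Coalgebra.counit (R := R) (k * a) = Coalgebra.counit (R := R) (k * b)) →
      (TensorProduct.lid R H)
        ((TensorProduct.map Coalgebra.counit LinearMap.id) (x * a ⊗ₜ[R] (1 : H))) =
      (TensorProduct.lid R H)
        ((TensorProduct.map Coalgebra.counit LinearMap.id) (x * b ⊗ₜ[R] (1 : H))) := by
    intro x a b hab
    induction x using TensorProduct.induction_on with
    | zero => simp
    | tmul u v => simp [Algebra.TensorProduct.tmul_mul_tmul, hab u]
    | add y z hy hz => simp only [add_mul, map_add]; rw [hy, hz]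
  constructor
  · ext h k
    simp only [LinearMap.comp_apply, gmap, LinearMap.llcomp_apply, LinearMap.flip_apply,
      LinearMap.mul_apply']
    exact key h k
  · ext h
    simp only [LinearMap.comp_apply, epsT, LinearMap.coe_comp, Function.comp_apply,
      AlgHom.toLinearMap_apply, Algebra.TensorProduct.includeLeft_apply,
      LinearMap.mulLeft_apply, LinearEquiv.coe_coe]
    exact gen _ _ _ (key h)
end

section
/- Let H be a comonoidal prebialgebra (satisfying both (lc) and (rc)). Then ε_s(h)ε_t(k) = ε_t(k)ε_s(h) for all h,k ∈ H, where ε_t(h) = ε(1₍₁₎h)1₍₂₎ and ε_s(h) = ε(h1₍₂₎)1₍₁₎. -/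
open TensorProduct Coalgebra

/-- In a comonoidal prebialgebra (satisfying (lc) and (rc)),
`ε_s(h)ε_t(k) = ε_t(k)ε_s(h)` for all `h,k`. -/
theorem c_epsS_epsT_comm
    (R H : Type) [CommRing R] [Ring H] [Algebra R H] [Coalgebra R H]
    (hpre : ComulMul R H) (hlc : LC R H) (hrc : RC R H) :
    ∀ h k : H, epsS R H h * epsT R H k = epsT R H k * epsS R H h := by
  intro h k
  set u := Coalgebra.comul (R := R) (1 : H) with hu
  set φk : H →ₗ[R] R := Coalgebra.counit ∘ₗ LinearMap.mulRight R k with hφk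
  set ψh : H →ₗ[R] R := Coalgebra.counit ∘ₗ LinearMap.mulLeft R h with hψh
  set Tk : H ⊗[R] H →ₗ[R] H :=
    (TensorProduct.lid R H).toLinearMap ∘ₗ TensorProduct.map φk LinearMap.id with hTk
  set Sh : H ⊗[R] H →ₗ[R] H :=
    (TensorProduct.rid R H).toLinearMap ∘ₗ TensorProduct.map LinearMap.id ψh with hSh
  set Φ : H ⊗[R] (H ⊗[R] H) →ₗ[R] H :=
    (TensorProduct.lid R H).toLinearMap ∘ₗ TensorProduct.map φk Sh with hΦ
  have lemA : ∀ a b : H ⊗[R] H,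
      Φ ((TensorProduct.map LinearMap.id Algebra.TensorProduct.includeLeft.toLinearMap a) *
        ((1 : H) ⊗ₜ[R] b)) = Tk a * Sh b := by
    intro a b
    induction a using TensorProduct.induction_on with
    | zero => simp
    | tmul x y =>
      induction b using TensorProduct.induction_on with
      | zero => simp
      | tmul p q =>
        simp [hΦ, hTk, hSh, Algebra.TensorProduct.tmul_mul_tmul,
          mul_smul_comm, smul_mul_assoc, smul_smul, mul_comm]
      | add b1 b2 ih1 ih2 =>
        rw [TensorProduct.tmul_add, mul_add, map_add, ih1, ih2, map_add, mul_add]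
    | add a1 a2 ih1 ih2 =>
      rw [map_add, add_mul, map_add, ih1, ih2, map_add, add_mul]
  have lemB : ∀ a b : H ⊗[R] H,
      Φ (((1 : H) ⊗ₜ[R] b) *
        (TensorProduct.map LinearMap.id Algebra.TensorProduct.includeLeft.toLinearMap a)) =
        Sh b * Tk a := by
    intro a b
    induction a using TensorProduct.induction_on with
    | zero => simp
    | tmul x y =>
      induction b using TensorProduct.induction_on with
      | zero => simp
      | tmul p q =>
        simp [hΦ, hTk, hSh, Algebra.TensorProduct.tmul_mul_tmul,
          mul_smul_comm, smul_mul_assoc, smul_smul, mul_comm]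
      | add b1 b2 ih1 ih2 =>
        rw [TensorProduct.tmul_add, add_mul, map_add, ih1, ih2, map_add, add_mul]
    | add a1 a2 ih1 ih2 =>
      rw [map_add, mul_add, map_add, ih1, ih2, map_add, mul_add]
  have hT : epsT R H k = Tk u := by
    have step : ∀ a : H ⊗[R] H,
        TensorProduct.map (Coalgebra.counit (R := R)) (LinearMap.id (R := R) (M := H))
          (a * ((k : H) ⊗ₜ[R] (1 : H))) = TensorProduct.map φk LinearMap.id a := by
      intro a
      induction a using TensorProduct.induction_on with
      | zero => simp
      | tmul x y => simp [Algebra.TensorProduct.tmul_mul_tmul, hφk]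
      | add a1 a2 ih1 ih2 => rw [add_mul, map_add, ih1, ih2, map_add]
    simp only [epsT, hTk, LinearMap.coe_comp, Function.comp_apply,
      AlgHom.toLinearMap_apply, Algebra.TensorProduct.includeLeft_apply,
      LinearMap.mulLeft_apply, LinearEquiv.coe_coe]
    rw [← hu, ← step u]
  have hS : epsS R H h = Sh u := by
    have step : ∀ a : H ⊗[R] H,
        TensorProduct.map (LinearMap.id (R := R) (M := H)) (Coalgebra.counit (R := R))
          (((1 : H) ⊗ₜ[R] (h : H)) * a) = TensorProduct.map LinearMap.id ψh a := by
      intro a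
      induction a using TensorProduct.induction_on with
      | zero => simp
      | tmul x y => simp [Algebra.TensorProduct.tmul_mul_tmul, hψh]
      | add a1 a2 ih1 ih2 => rw [mul_add, map_add, ih1, ih2, map_add]
    simp only [epsS, hSh, LinearMap.coe_comp, Function.comp_apply,
      AlgHom.toLinearMap_apply, Algebra.TensorProduct.includeRight_apply,
      LinearMap.mulRight_apply, LinearEquiv.coe_coe]
    rw [← hu, ← step u]
  have key : d1Left R H * d1Right R H = d1Right R H * d1Left R H := hlc.symm.trans hrc
  have key2 := congrArg Φ key
  simp only [d1Left, d1Right, ← hu] at key2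
  rw [lemA u u, lemB u u] at key2
  rw [hT, hS, key2]
end

section
/- Let H be a monoidal prebialgebra (satisfying both (lm) and (rm)). Then ε_s(h₍₁₎) ⊗ ε_t(h₍₂₎) = ε_s(h₍₂₎) ⊗ ε_t(h₍₁₎) for all h ∈ H, where ε_t(h) = ε(1₍₁₎h)1₍₂₎ and ε_s(h) = ε(h1₍₂₎)1₍₁₎. -/
open TensorProduct Coalgebra

/-- In a monoidal prebialgebra (satisfying (lm) and (rm)),
`ε_s(h₍₁₎) ⊗ ε_t(h₍₂₎) = ε_s(h₍₂₎) ⊗ ε_t(h₍₁₎)` for all `h`. -/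
theorem m_epsS_epsT_symm
    (R H : Type) [CommRing R] [Ring H] [Algebra R H] [Coalgebra R H]
    (hpre : ComulMul R H) (hlm : LM R H) (hrm : RM R H) :
    ∀ h : H,
      (TensorProduct.map (epsS R H) (epsT R H)) (Coalgebra.comul (R := R) h) =
        (TensorProduct.map (epsS R H) (epsT R H))
          ((TensorProduct.comm R H H) (Coalgebra.comul (R := R) h)) := by
  intro h
  classical
  obtain ⟨S, hS⟩ := TensorProduct.exists_finset (Coalgebra.comul (R := R) (1 : H))
  obtain ⟨T, hT⟩ := TensorProduct.exists_finset (Coalgebra.comul (R := R) h)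
  have hepsS : ∀ c : H, epsS R H c =
      ∑ q ∈ S, Coalgebra.counit (R := R) (c * q.2) • q.1 := by
    intro c
    simp only [epsS, LinearMap.coe_comp, Function.comp_apply, AlgHom.toLinearMap_apply,
      Algebra.TensorProduct.includeRight_apply, LinearMap.mulRight_apply, hS,
      Finset.mul_sum, LinearEquiv.coe_coe]
    simp [Algebra.TensorProduct.tmul_mul_tmul, TensorProduct.smul_tmul]
  have hepsT : ∀ c : H, epsT R H c =
      ∑ q ∈ S, Coalgebra.counit (R := R) (q.1 * c) • q.2 := by
    intro c
    simp only [epsT, LinearMap.coe_comp, Function.comp_apply, AlgHom.toLinearMap_apply,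
      Algebra.TensorProduct.includeLeft_apply, LinearMap.mulLeft_apply, hS,
      Finset.sum_mul, LinearEquiv.coe_coe]
    simp [Algebra.TensorProduct.tmul_mul_tmul]
  have key : ∀ a b : H,
      (∑ p ∈ T, Coalgebra.counit (R := R) (p.1 * b) * Coalgebra.counit (R := R) (a * p.2)) =
      ∑ p ∈ T, Coalgebra.counit (R := R) (a * p.1) * Coalgebra.counit (R := R) (p.2 * b) := by
    intro a b
    have h1 := hrm a h b
    have h2 := hlm a h b
    rw [hT] at h1 h2
    simp only [map_sum, TensorProduct.map_tmul, LinearMap.coe_comp, Function.comp_apply,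
      LinearMap.mulRight_apply, LinearMap.mulLeft_apply, LinearMap.mul'_apply] at h1 h2
    rw [← h1, ← h2]
  rw [hT]
  simp only [map_sum, TensorProduct.comm_tmul, TensorProduct.map_tmul, hepsS, hepsT,
    TensorProduct.sum_tmul, TensorProduct.tmul_sum, TensorProduct.smul_tmul, tmul_smul,
    smul_smul]
  simp only [Finset.smul_sum, smul_smul]
  rw [Finset.sum_comm]
  conv_rhs => rw [Finset.sum_comm]
  refine Finset.sum_congr rfl fun q _ => ?_
  rw [Finset.sum_comm]
  conv_rhs => rw [Finset.sum_comm]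
  refine Finset.sum_congr rfl fun q' _ => ?_
  rw [← Finset.sum_smul, ← Finset.sum_smul]
  congr 1
  rw [← key q.1 q'.2]
  exact Finset.sum_congr rfl fun p _ => mul_comm _ _
end
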